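/- arXiv:1412.0588 — 7 statements merged into one kernel-verified Lean document; each statement's English description precedes it below -/
import Mathlib

section
/- Fix p > 0 with p ≠ 2 potentially, and an n×d matrix A of full column rank. If v and w are positive weight vectors with v_i ≈_α w_i for all i (α ≥ 1), then for each row i, (a_iᵀ(AᵀV^{1−2/p}A)⁻¹a_i)^{p/2} ≈_{α^{|p/2−1|}} (a_iᵀ(AᵀW^{1−2/p}A)⁻¹a_i)^{p/2}, where V, W are the diagonal matrices of v, w. -/
open Matrix

lemma myQuadform {n d : ℕ} (A : Matrix (Fin n) (Fin d) ℝ) (D : Fin n → ℝ) (x : Fin d → ℝ) :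
    x ⬝ᵥ (Aᵀ * Matrix.diagonal D * A).mulVec x = ∑ i, D i * (A.mulVec x i) ^ 2 := by
  rw [← Matrix.mulVec_mulVec, ← Matrix.mulVec_mulVec, Matrix.dotProduct_mulVec,
    Matrix.vecMul_transpose]
  simp only [dotProduct, Matrix.mulVec_diagonal]
  exact Finset.sum_congr rfl fun i _ => by ring

lemma myCT {k l : ℕ} (B : Matrix (Fin k) (Fin l) ℝ) : Bᴴ = Bᵀ := by
  ext i j
  simp [Matrix.conjTranspose_apply]

lemma myInj {n d : ℕ} (A : Matrix (Fin n) (Fin d) ℝ) (hA : A.rank = d) :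
    Function.Injective A.mulVec := by
  have hker : LinearMap.ker A.mulVecLin = ⊥ := by
    have h1 := LinearMap.finrank_range_add_finrank_ker A.mulVecLin
    rw [Module.finrank_fin_fun] at h1
    have h2 : Module.finrank ℝ (LinearMap.range A.mulVecLin) = d := hA
    have h3 : Module.finrank ℝ (LinearMap.ker A.mulVecLin) = 0 := by omega
    exact Submodule.finrank_eq_zero.mp h3
  have := LinearMap.ker_eq_bot.mp hker
  intro x y hxy
  exact this (by simpa [Matrix.mulVecLin_apply] using hxy)

lemma myPosDef {n d : ℕ} (A : Matrix (Fin n) (Fin d) ℝ) (hA : A.rank = d)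
    (D : Fin n → ℝ) (hD : ∀ i, 0 < D i) :
    (Aᵀ * Matrix.diagonal D * A).PosDef := by
  refine Matrix.posDef_iff_dotProduct_mulVec.mpr ⟨?_, ?_⟩
  · show (Aᵀ * Matrix.diagonal D * A)ᴴ = _
    rw [myCT]
    simp [Matrix.transpose_mul, Matrix.diagonal_transpose, Matrix.mul_assoc]
  · intro x hx
    have hAx : A.mulVec x ≠ 0 := by
      intro h
      apply hx
      apply myInj A hA
      rw [h, Matrix.mulVec_zero]
    obtain ⟨i0, hi0⟩ : ∃ i, A.mulVec x i ≠ 0 := by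
      by_contra h
      push_neg at h
      exact hAx (funext h)
    have : (0:ℝ) < x ⬝ᵥ (Aᵀ * Matrix.diagonal D * A).mulVec x := by
      rw [myQuadform]
      apply Finset.sum_pos' (fun i _ => mul_nonneg (hD i).le (sq_nonneg _))
      exact ⟨i0, Finset.mem_univ _,
        mul_pos (hD i0) (lt_of_le_of_ne (sq_nonneg _) (Ne.symm (pow_ne_zero 2 hi0)))⟩
    simpa using this

lemma myKey {d : ℕ} {M : Matrix (Fin d) (Fin d) ℝ} (hM : M.PosDef) (a x : Fin d → ℝ) :
    2 * (a ⬝ᵥ x) - x ⬝ᵥ M.mulVec x ≤ a ⬝ᵥ M⁻¹.mulVec a := by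
  set y := M⁻¹.mulVec a with hy
  have hMy : M.mulVec y = a := by
    rw [hy, Matrix.mulVec_mulVec, Matrix.mul_nonsing_inv _
      ((Matrix.isUnit_iff_isUnit_det _).mp hM.isUnit), Matrix.one_mulVec]
  have hMt : Mᵀ = M := by
    rw [← myCT]
    exact hM.isHermitian
  have hsym : ∀ u v : Fin d → ℝ, u ⬝ᵥ M.mulVec v = v ⬝ᵥ M.mulVec u := by
    intro u v
    rw [Matrix.dotProduct_mulVec, ← Matrix.mulVec_transpose, hMt, dotProduct_comm]
  have h0 : (0:ℝ) ≤ (x - y) ⬝ᵥ M.mulVec (x - y) := by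
    have := hM.posSemidef.dotProduct_mulVec_nonneg (x - y)
    simpa using this
  have hexp : (x - y) ⬝ᵥ M.mulVec (x - y)
      = x ⬝ᵥ M.mulVec x - 2 * (a ⬝ᵥ x) + a ⬝ᵥ y := by
    rw [Matrix.mulVec_sub, dotProduct_sub, sub_dotProduct, sub_dotProduct,
      hsym y x, hMy]
    rw [dotProduct_comm x a, dotProduct_comm y a]
    ring
  rw [hexp] at h0
  linarith

lemma myComp {d : ℕ} {M N : Matrix (Fin d) (Fin d) ℝ} (hM : M.PosDef) (hN : N.PosDef)
    {c : ℝ} (hc : 0 < c) (h : ∀ x, x ⬝ᵥ M.mulVec x ≤ c * (x ⬝ᵥ N.mulVec x)) (a : Fin d → ℝ) :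
    a ⬝ᵥ N⁻¹.mulVec a ≤ c * (a ⬝ᵥ M⁻¹.mulVec a) := by
  set y := N⁻¹.mulVec a with hy
  have hNy : N.mulVec y = a := by
    rw [hy, Matrix.mulVec_mulVec, Matrix.mul_nonsing_inv _
      ((Matrix.isUnit_iff_isUnit_det _).mp hN.isUnit), Matrix.one_mulVec]
  have e1 : a ⬝ᵥ N⁻¹.mulVec a = 2 * (a ⬝ᵥ y) - y ⬝ᵥ N.mulVec y := by
    rw [hNy, ← hy, dotProduct_comm y a]
    ring
  have hkey := myKey hM a (c⁻¹ • y)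
  have hs1 : a ⬝ᵥ (c⁻¹ • y) = c⁻¹ * (a ⬝ᵥ y) := by
    simp [dotProduct_smul, smul_eq_mul]
  have hs2 : (c⁻¹ • y) ⬝ᵥ M.mulVec (c⁻¹ • y) = c⁻¹ * c⁻¹ * (y ⬝ᵥ M.mulVec y) := by
    rw [Matrix.mulVec_smul, dotProduct_smul, smul_dotProduct]
    simp [smul_eq_mul]; ring
  rw [hs1, hs2] at hkey
  have hMy := h y
  have hcne : c ≠ 0 := ne_of_gt hc
  rw [e1]
  have hquad : (0:ℝ) ≤ y ⬝ᵥ M.mulVec y := by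
    have := hM.posSemidef.dotProduct_mulVec_nonneg y
    simpa using this
  have h1 : c * (2 * (c⁻¹ * (a ⬝ᵥ y)) - c⁻¹ * c⁻¹ * (y ⬝ᵥ M.mulVec y))
      = 2 * (a ⬝ᵥ y) - c⁻¹ * (y ⬝ᵥ M.mulVec y) := by
    field_simp
  have h2 : 2 * (a ⬝ᵥ y) - c⁻¹ * (y ⬝ᵥ M.mulVec y) ≤ c * (a ⬝ᵥ M⁻¹.mulVec a) := by
    rw [← h1]
    exact mul_le_mul_of_nonneg_left hkey (le_of_lt hc)
  have h3 : c⁻¹ * (y ⬝ᵥ M.mulVec y) ≤ y ⬝ᵥ N.mulVec y := by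
    rw [inv_mul_le_iff₀ hc]
    exact hMy
  linarith

lemma myPointwise {α u v q : ℝ} (hα : 1 ≤ α) (hu : 0 < u) (hv : 0 < v)
    (h1 : u ≤ α * v) (h2 : (1 / α) * v ≤ u) :
    u ^ q ≤ α ^ |q| * v ^ q := by
  have hα0 : (0:ℝ) < α := lt_of_lt_of_le one_pos hα
  rcases le_or_gt 0 q with hq | hq
  · rw [abs_of_nonneg hq]
    calc u ^ q ≤ (α * v) ^ q := Real.rpow_le_rpow (le_of_lt hu) h1 hq
      _ = α ^ q * v ^ q := Real.mul_rpow (le_of_lt hα0) (le_of_lt hv)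
  · rw [abs_of_neg hq]
    have h2' : (1 / α) * v ≤ u := h2
    have hpos : (0:ℝ) < (1 / α) * v := by positivity
    calc u ^ q ≤ ((1 / α) * v) ^ q := Real.rpow_le_rpow_of_nonpos hpos h2' (le_of_lt hq)
      _ = (1 / α) ^ q * v ^ q := Real.mul_rpow (by positivity) (le_of_lt hv)
      _ = α ^ (-q) * v ^ q := by
          rw [one_div, Real.inv_rpow hα0.le, ← Real.rpow_neg hα0.le]
  
theorem stmt5 {n d : ℕ} (A : Matrix (Fin n) (Fin d) ℝ) (hA : A.rank = d)
    (p α : ℝ) (hp : 0 < p) (hα : 1 ≤ α) (v w : Fin n → ℝ)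
    (hv : ∀ i, 0 < v i) (hw : ∀ i, 0 < w i)
    (happrox : ∀ i, (1 / α) * w i ≤ v i ∧ v i ≤ α * w i) :
    ∀ i,
      (1 / (α ^ |p / 2 - 1|)) *
          (A i ⬝ᵥ (Aᵀ * Matrix.diagonal (fun j => w j ^ (1 - 2 / p)) * A)⁻¹.mulVec (A i)) ^ (p / 2)
        ≤ (A i ⬝ᵥ (Aᵀ * Matrix.diagonal (fun j => v j ^ (1 - 2 / p)) * A)⁻¹.mulVec (A i)) ^ (p / 2) ∧
      (A i ⬝ᵥ (Aᵀ * Matrix.diagonal (fun j => v j ^ (1 - 2 / p)) * A)⁻¹.mulVec (A i)) ^ (p / 2)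
        ≤ (α ^ |p / 2 - 1|) *
          (A i ⬝ᵥ (Aᵀ * Matrix.diagonal (fun j => w j ^ (1 - 2 / p)) * A)⁻¹.mulVec (A i)) ^ (p / 2) := by
  intro i
  have hα0 : (0:ℝ) < α := lt_of_lt_of_le one_pos hα
  set q : ℝ := 1 - 2 / p with hq
  set c : ℝ := α ^ |q| with hc
  have hc0 : (0:ℝ) < c := Real.rpow_pos_of_pos hα0 _
  set Dv : Fin n → ℝ := fun j => v j ^ q with hDv
  set Dw : Fin n → ℝ := fun j => w j ^ q with hDw
  have hDvpos : ∀ j, 0 < Dv j := fun j => Real.rpow_pos_of_pos (hv j) _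
  have hDwpos : ∀ j, 0 < Dw j := fun j => Real.rpow_pos_of_pos (hw j) _
  have hMv : (Aᵀ * Matrix.diagonal Dv * A).PosDef := myPosDef A hA Dv hDvpos
  have hMw : (Aᵀ * Matrix.diagonal Dw * A).PosDef := myPosDef A hA Dw hDwpos
  -- pointwise bounds both ways
  have hvw : ∀ j, Dv j ≤ c * Dw j := by
    intro j
    exact myPointwise hα (hv j) (hw j) (happrox j).2 (happrox j).1
  have hwv : ∀ j, Dw j ≤ c * Dv j := by
    intro j
    refine myPointwise hα (hw j) (hv j) ?_ ?_
    · calc w j = α * (1 / α * w j) := by field_simp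
        _ ≤ α * v j := mul_le_mul_of_nonneg_left (happrox j).1 hα0.le
    · calc 1 / α * v j ≤ 1 / α * (α * w j) :=
          mul_le_mul_of_nonneg_left (happrox j).2 (by positivity)
        _ = w j := by field_simp
  -- quadratic form comparisons
  have hquadvw : ∀ x : Fin d → ℝ, x ⬝ᵥ (Aᵀ * Matrix.diagonal Dv * A).mulVec x
      ≤ c * (x ⬝ᵥ (Aᵀ * Matrix.diagonal Dw * A).mulVec x) := by
    intro x
    rw [myQuadform, myQuadform, Finset.mul_sum]
    apply Finset.sum_le_sum
    intro j _
    have := mul_le_mul_of_nonneg_right (hvw j) (sq_nonneg (A.mulVec x j))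
    calc Dv j * (A.mulVec x j) ^ 2 ≤ c * Dw j * (A.mulVec x j) ^ 2 := this
      _ = c * (Dw j * (A.mulVec x j) ^ 2) := by ring
  have hquadwv : ∀ x : Fin d → ℝ, x ⬝ᵥ (Aᵀ * Matrix.diagonal Dw * A).mulVec x
      ≤ c * (x ⬝ᵥ (Aᵀ * Matrix.diagonal Dv * A).mulVec x) := by
    intro x
    rw [myQuadform, myQuadform, Finset.mul_sum]
    apply Finset.sum_le_sum
    intro j _
    have := mul_le_mul_of_nonneg_right (hwv j) (sq_nonneg (A.mulVec x j))
    calc Dw j * (A.mulVec x j) ^ 2 ≤ c * Dv j * (A.mulVec x j) ^ 2 := this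
      _ = c * (Dv j * (A.mulVec x j) ^ 2) := by ring
  set s : ℝ := A i ⬝ᵥ (Aᵀ * Matrix.diagonal Dv * A)⁻¹.mulVec (A i) with hs
  set t : ℝ := A i ⬝ᵥ (Aᵀ * Matrix.diagonal Dw * A)⁻¹.mulVec (A i) with ht
  have hst : s ≤ c * t := myComp hMw hMv hc0 hquadwv (A i)
  have hts : t ≤ c * s := myComp hMv hMw hc0 hquadvw (A i)
  have hsnn : 0 ≤ s := by
    have := hMv.posSemidef.inv.dotProduct_mulVec_nonneg (A i); simpa [← hs] using this
  have htnn : 0 ≤ t := by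
    have := hMw.posSemidef.inv.dotProduct_mulVec_nonneg (A i); simpa [← ht] using this
  have hp2 : (0:ℝ) ≤ p / 2 := by positivity
  -- exponent identity
  have hexp : c ^ (p / 2) = α ^ |p / 2 - 1| := by
    rw [hc, ← Real.rpow_mul (le_of_lt hα0)]
    congr 1
    have hpne : p ≠ 0 := ne_of_gt hp
    have hqe : q * (p / 2) = p / 2 - 1 := by
      rw [hq]
      field_simp
    rw [← hqe, abs_mul, abs_of_pos (show (0:ℝ) < p / 2 by positivity)]
  have hcp : (0:ℝ) < α ^ |p / 2 - 1| := Real.rpow_pos_of_pos hα0 _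
  have key1 : t ^ (p / 2) ≤ α ^ |p / 2 - 1| * s ^ (p / 2) := by
    calc t ^ (p / 2) ≤ (c * s) ^ (p / 2) := Real.rpow_le_rpow htnn hts hp2
      _ = c ^ (p / 2) * s ^ (p / 2) := Real.mul_rpow (le_of_lt hc0) hsnn
      _ = α ^ |p / 2 - 1| * s ^ (p / 2) := by rw [hexp]
  have key2 : s ^ (p / 2) ≤ α ^ |p / 2 - 1| * t ^ (p / 2) := by
    calc s ^ (p / 2) ≤ (c * t) ^ (p / 2) := Real.rpow_le_rpow hsnn hst hp2
      _ = c ^ (p / 2) * t ^ (p / 2) := Real.mul_rpow (le_of_lt hc0) htnn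
      _ = α ^ |p / 2 - 1| * t ^ (p / 2) := by rw [hexp]
  constructor
  · rw [one_div, inv_mul_le_iff₀ hcp]
    exact key1
  · exact key2
end

section
/- Let p > 0 and let w̄ be the ℓ_p Lewis weights of an n×d matrix A of full column rank, normalized so that AᵀW̄^{1−2/p}A = I. Then AᵀA ≈_{n^{|1−2/p|}} I in the Loewner order. -/
open Matrix Finset


lemma jensen_upper {n : ℕ} (q : ℝ) (hq0 : 0 ≤ q) (hq1 : q ≤ 1)
    (x : Fin n → ℝ) (hx : ∀ i, 0 ≤ x i) (hsum : ∑ i, x i = 1) :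
    ∑ i, x i ^ q ≤ (n : ℝ) ^ (1 - q) := by
  have hn : 0 < n := by
    rcases Nat.eq_zero_or_pos n with h | h
    · subst h; simp at hsum
    · exact h
  have hnp : (0:ℝ) < n := by exact_mod_cast hn
  have h := (Real.concaveOn_rpow hq0 hq1).le_map_sum (t := Finset.univ)
    (w := fun _ : Fin n => (n:ℝ)⁻¹) (p := x)
    (fun i _ => by positivity)
    (by simp [Finset.card_univ]; field_simp)
    (fun i _ => hx i)
  simp only [smul_eq_mul, ← Finset.mul_sum, hsum, mul_one] at h
  have h2 : (n:ℝ)⁻¹ * ∑ i, x i ^ q ≤ ((n:ℝ)⁻¹) ^ q := h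
  calc ∑ i, x i ^ q = (n:ℝ) * ((n:ℝ)⁻¹ * ∑ i, x i ^ q) := by field_simp
    _ ≤ (n:ℝ) * ((n:ℝ)⁻¹) ^ q := by nlinarith
    _ = (n : ℝ) ^ (1 - q) := by
        rw [Real.rpow_sub hnp, Real.rpow_one, Real.inv_rpow hnp.le, div_eq_mul_inv]

lemma jensen_lower {n : ℕ} (q : ℝ) (hq : 1 ≤ q)
    (x : Fin n → ℝ) (hx : ∀ i, 0 ≤ x i) (hsum : ∑ i, x i = 1) :
    (n : ℝ) ^ (1 - q) ≤ ∑ i, x i ^ q := by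
  have hn : 0 < n := by
    rcases Nat.eq_zero_or_pos n with h | h
    · subst h; simp at hsum
    · exact h
  have hnp : (0:ℝ) < n := by exact_mod_cast hn
  have h := Real.rpow_arith_mean_le_arith_mean_rpow Finset.univ
    (fun _ : Fin n => (n:ℝ)⁻¹) x (fun i _ => by positivity)
    (by simp [Finset.card_univ]; field_simp) (fun i _ => hx i) hq
  simp only [← Finset.mul_sum, hsum, mul_one] at h
  calc (n:ℝ) ^ (1 - q) = (n:ℝ) * ((n:ℝ)⁻¹) ^ q := by
        rw [Real.rpow_sub hnp, Real.rpow_one, Real.inv_rpow hnp.le, div_eq_mul_inv]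
    _ ≤ (n:ℝ) * ((n:ℝ)⁻¹ * ∑ i, x i ^ q) := by nlinarith
    _ = ∑ i, x i ^ q := by field_simp


section helpers

lemma quad_form_diag {n d : ℕ} (A : Matrix (Fin n) (Fin d) ℝ) (f : Fin n → ℝ)
    (x : Fin d → ℝ) :
    x ⬝ᵥ (Aᵀ * Matrix.diagonal f * A).mulVec x = ∑ i, f i * (A i ⬝ᵥ x) ^ 2 := by
  rw [← Matrix.mulVec_mulVec, ← Matrix.mulVec_mulVec, Matrix.dotProduct_mulVec,
    Matrix.vecMul_transpose]
  simp only [dotProduct, Matrix.mulVec_diagonal]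
  refine Finset.sum_congr rfl fun i _ => ?_
  have : A.mulVec x i = A i ⬝ᵥ x := rfl
  rw [this]
  simp only [dotProduct]
  ring

end helpers

theorem stmt8 {n d : ℕ} (A : Matrix (Fin n) (Fin d) ℝ) (hA : A.rank = d)
    (p : ℝ) (hp : 0 < p) (w : Fin n → ℝ) (hw : ∀ i, 0 < w i)
    (hlewis : ∀ i,
      A i ⬝ᵥ (Aᵀ * Matrix.diagonal (fun j => w j ^ (1 - 2 / p)) * A)⁻¹.mulVec (A i)
        = w i ^ (2 / p))
    (hnorm : Aᵀ * Matrix.diagonal (fun j => w j ^ (1 - 2 / p)) * A = 1) :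
    (Aᵀ * A - (1 / (n : ℝ) ^ |1 - 2 / p|) • (1 : Matrix (Fin d) (Fin d) ℝ)).PosSemidef ∧
      (((n : ℝ) ^ |1 - 2 / p|) • (1 : Matrix (Fin d) (Fin d) ℝ) - Aᵀ * A).PosSemidef := by
  set c : ℝ := 1 - 2 / p with hc
  have hq2p : 0 < 2 / p := by positivity
  have hc0' : (0:ℝ) < 1 - c := by rw [hc]; linarith
  have hsplit : ∀ y : ℝ, 0 < y → y ^ (1 - c) = y ^ (-c) * y := by
    intro y hy
    rw [show (1:ℝ) - c = -c + 1 by ring, Real.rpow_add hy, Real.rpow_one]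
  -- quadratic form identities
  have hquad : ∀ x : Fin d → ℝ, ∑ i, w i ^ c * (A i ⬝ᵥ x) ^ 2 = x ⬝ᵥ x := by
    intro x
    rw [← quad_form_diag A (fun j => w j ^ c) x, hnorm, Matrix.one_mulVec]
  have hAtA : ∀ x : Fin d → ℝ, x ⬝ᵥ (Aᵀ * A).mulVec x = ∑ i, (A i ⬝ᵥ x) ^ 2 := by
    intro x
    have h := quad_form_diag A (fun _ => (1:ℝ)) x
    simpa [Matrix.diagonal_one] using h
  -- norm of rows
  have hai : ∀ i, A i ⬝ᵥ A i = w i ^ (2 / p) := by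
    intro i
    have h := hlewis i
    rwa [hnorm, inv_one, Matrix.one_mulVec] at h
  have hcc : ∀ i, w i ^ c * w i ^ (2 / p) = w i := by
    intro i
    rw [← Real.rpow_add (hw i)]
    norm_num [hc]
  -- weights at most 1
  have hw1 : ∀ i, w i ≤ 1 := by
    intro i
    have hqi := hquad (A i)
    have hterm : w i ^ c * (A i ⬝ᵥ A i) ^ 2 ≤ ∑ j, w j ^ c * (A j ⬝ᵥ A i) ^ 2 :=
      Finset.single_le_sum (f := fun j => w j ^ c * (A j ⬝ᵥ A i) ^ 2)
        (fun j _ => mul_nonneg (Real.rpow_nonneg (hw j).le _) (sq_nonneg _)) (Finset.mem_univ i)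
    rw [hqi, hai i] at hterm
    have hpos : (0:ℝ) < w i ^ (2 / p) := Real.rpow_pos_of_pos (hw i) _
    have h2 : w i ^ c * (w i ^ (2 / p)) ^ 2 = w i * w i ^ (2 / p) := by
      rw [sq, ← mul_assoc, hcc i]
    rw [h2] at hterm
    nlinarith
  -- Cauchy-Schwarz
  have hCS : ∀ (i : Fin n) (x : Fin d → ℝ),
      (A i ⬝ᵥ x) ^ 2 ≤ w i ^ (2 / p) * (x ⬝ᵥ x) := by
    intro i x
    have h := Finset.sum_mul_sq_le_sq_mul_sq Finset.univ (A i) x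
    have h2 : (∑ j, A i j ^ 2) = w i ^ (2 / p) := by
      rw [← hai i]; simp [dotProduct, sq]
    have h3 : (∑ j, x j ^ 2) = x ⬝ᵥ x := by simp [dotProduct, sq]
    calc (A i ⬝ᵥ x) ^ 2 = (∑ j, A i j * x j) ^ 2 := rfl
      _ ≤ (∑ j, A i j ^ 2) * ∑ j, x j ^ 2 := h
      _ = w i ^ (2 / p) * (x ⬝ᵥ x) := by rw [h2, h3]
  -- main bound on quadratic form
  have main : ∀ x : Fin d → ℝ,
      (n : ℝ) ^ (-|c|) * (x ⬝ᵥ x) ≤ ∑ i, (A i ⬝ᵥ x) ^ 2 ∧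
      ∑ i, (A i ⬝ᵥ x) ^ 2 ≤ (n : ℝ) ^ |c| * (x ⬝ᵥ x) := by
    intro x
    by_cases hx0 : x = 0
    · subst hx0
      simp [dotProduct]
    · have hS : 0 < x ⬝ᵥ x := by
        rcases lt_or_eq_of_le (Finset.sum_nonneg (fun j _ => mul_self_nonneg (x j)) :
          (0:ℝ) ≤ x ⬝ᵥ x) with h | h
        · exact h
        · exact absurd (dotProduct_self_eq_zero.mp h.symm) hx0
      set S := x ⬝ᵥ x with hSdef
      set t : Fin n → ℝ := fun i => w i ^ c * (A i ⬝ᵥ x) ^ 2 / S with htdef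
      have ht0 : ∀ i, 0 ≤ t i := fun i => by
        have := (hw i); positivity
      have htsum : ∑ i, t i = 1 := by
        rw [htdef, ← Finset.sum_div, hquad x, ← hSdef]
        field_simp
      have hn1 : (1:ℝ) ≤ n := by
        by_contra h
        push_neg at h
        have : n = 0 := by exact_mod_cast Nat.lt_one_iff.mp (by exact_mod_cast h)
        subst this
        simp at htsum
      have htw : ∀ i, t i ≤ w i := by
        intro i
        rw [htdef, div_le_iff₀ hS]
        calc w i ^ c * (A i ⬝ᵥ x) ^ 2 ≤ w i ^ c * (w i ^ (2/p) * S) :=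
              mul_le_mul_of_nonneg_left (hCS i x) (Real.rpow_nonneg (hw i).le _)
          _ = w i * S := by rw [← mul_assoc, hcc i]
      have hsum_eq : ∑ i, (A i ⬝ᵥ x) ^ 2 = (∑ i, w i ^ (-c) * t i) * S := by
        rw [Finset.sum_mul]
        refine Finset.sum_congr rfl fun i _ => ?_
        rw [htdef]
        have hinv : w i ^ (-c) * w i ^ c = 1 := by
          rw [← Real.rpow_add (hw i)]; norm_num
        field_simp
        nlinarith [hinv]
      rw [hsum_eq]
      have hQ : (n:ℝ) ^ (-|c|) ≤ ∑ i, w i ^ (-c) * t i ∧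
          (∑ i, w i ^ (-c) * t i) ≤ (n:ℝ) ^ |c| := by
        rcases le_or_gt 0 c with hcpos | hcneg
        · rw [abs_of_nonneg hcpos]
          constructor
          · calc (n:ℝ) ^ (-c) ≤ 1 :=
                  Real.rpow_le_one_of_one_le_of_nonpos hn1 (by linarith)
              _ = ∑ i, t i := htsum.symm
              _ ≤ ∑ i, w i ^ (-c) * t i := by
                  refine Finset.sum_le_sum fun i _ => ?_
                  have h1 : (1:ℝ) ≤ w i ^ (-c) :=
                    Real.one_le_rpow_of_pos_of_le_one_of_nonpos (hw i) (hw1 i) (by linarith)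
                  nlinarith [ht0 i]
          · have hc1 : 1 - c ≤ 1 := by linarith
            have hc0 : 0 ≤ 1 - c := by rw [hc]; linarith
            calc ∑ i, w i ^ (-c) * t i ≤ ∑ i, t i ^ (1 - c) := by
                  refine Finset.sum_le_sum fun i _ => ?_
                  rcases eq_or_lt_of_le (ht0 i) with h0 | h0
                  · rw [← h0, mul_zero, Real.zero_rpow hc0'.ne']
                  · have h1 : w i ^ (-c) ≤ t i ^ (-c) :=
                      Real.rpow_le_rpow_of_nonpos h0 (htw i) (by linarith)
                    calc w i ^ (-c) * t i ≤ t i ^ (-c) * t i :=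
                          mul_le_mul_of_nonneg_right h1 (ht0 i)
                      _ = t i ^ (1 - c) := (hsplit (t i) h0).symm
              _ ≤ (n:ℝ) ^ (1 - (1 - c)) := jensen_upper (1 - c) hc0 hc1 t ht0 htsum
              _ = (n:ℝ) ^ c := by norm_num
        · rw [abs_of_neg hcneg]
          constructor
          · have hc1 : 1 ≤ 1 - c := by linarith
            have key : ∀ i, t i ^ (1 - c) ≤ w i ^ (-c) * t i := by
              intro i
              rcases eq_or_lt_of_le (ht0 i) with h0 | h0
              · rw [← h0, mul_zero, Real.zero_rpow hc0'.ne']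
              · have h1 : t i ^ (-c) ≤ w i ^ (-c) :=
                  Real.rpow_le_rpow (ht0 i) (htw i) (by linarith)
                calc t i ^ (1 - c) = t i ^ (-c) * t i := hsplit (t i) h0
                  _ ≤ w i ^ (-c) * t i := mul_le_mul_of_nonneg_right h1 (ht0 i)
            calc (n:ℝ) ^ (-(-c)) = (n:ℝ) ^ (1 - (1 - c)) := by norm_num
              _ ≤ ∑ i, t i ^ (1 - c) := jensen_lower (1 - c) hc1 t ht0 htsum
              _ ≤ ∑ i, w i ^ (-c) * t i := Finset.sum_le_sum fun i _ => key i
          · calc ∑ i, w i ^ (-c) * t i ≤ ∑ i, t i := by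
                  refine Finset.sum_le_sum fun i _ => ?_
                  have h1 : w i ^ (-c) ≤ 1 :=
                    Real.rpow_le_one (hw i).le (hw1 i) (by linarith)
                  nlinarith [ht0 i]
              _ = 1 := htsum
              _ ≤ (n:ℝ) ^ (-c) := by
                  rw [show (1:ℝ) = (n:ℝ) ^ (0:ℝ) from (Real.rpow_zero _).symm]
                  exact Real.rpow_le_rpow_of_exponent_le hn1 (by linarith)
      constructor
      · have := hQ.1
        nlinarith
      · have := hQ.2
        nlinarith
  -- assemble
  have habs : |1 - 2 / p| = |c| := by rw [hc]
  have hherm : (Aᵀ * A).IsHermitian := by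
    have h := Matrix.isHermitian_conjTranspose_mul_self A
    simpa using h
  have hone : ∀ α : ℝ, (α • (1 : Matrix (Fin d) (Fin d) ℝ)).IsHermitian := by
    intro α
    simp [Matrix.IsHermitian]
  have hsmulquad : ∀ (α : ℝ) (x : Fin d → ℝ),
      x ⬝ᵥ (α • (1 : Matrix (Fin d) (Fin d) ℝ)).mulVec x = α * (x ⬝ᵥ x) := by
    intro α x
    rw [Matrix.smul_mulVec, Matrix.one_mulVec, dotProduct_smul, smul_eq_mul]
  have hninv : 1 / (n:ℝ) ^ |c| = (n:ℝ) ^ (-|c|) := by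
    rw [Real.rpow_neg (Nat.cast_nonneg n), one_div]
  constructor
  · refine Matrix.posSemidef_iff_dotProduct_mulVec.mpr ⟨(hherm.sub (hone _)), fun x => ?_⟩
    rw [star_trivial, Matrix.sub_mulVec, dotProduct_sub, hAtA x, habs, hsmulquad,
      hninv]
    have := (main x).1
    linarith
  · refine Matrix.posSemidef_iff_dotProduct_mulVec.mpr ⟨((hone _).sub hherm), fun x => ?_⟩
    rw [star_trivial, Matrix.sub_mulVec, dotProduct_sub, hAtA x, habs, hsmulquad]
    have := (main x).2
    linarith
end

section
/- For 0 < p < 4, ℓ_p Lewis weights are c-stable with c = (p/2)/(1 − |p/2 − 1|): any α-almost Lewis weights w of A satisfy w_i ≈_{α^c} w̄_i for all i, where w̄ are the true Lewis weights. -/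
open Matrix



lemma aux_quad {n d : ℕ} (A : Matrix (Fin n) (Fin d) ℝ) (D : Fin n → ℝ) (x : Fin d → ℝ) :
    x ⬝ᵥ (Aᵀ * Matrix.diagonal D * A).mulVec x = ∑ j, D j * (A.mulVec x j)^2 := by
  rw [← mulVec_mulVec, ← mulVec_mulVec, dotProduct_mulVec, vecMul_transpose]
  simp only [dotProduct, mulVec_diagonal]
  exact Finset.sum_congr rfl fun j _ => by ring

lemma aux_inj {n d : ℕ} (A : Matrix (Fin n) (Fin d) ℝ) (hA : A.rank = d) :
    ∀ x, A.mulVec x = 0 → x = 0 := by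
  have h1 := LinearMap.finrank_range_add_finrank_ker A.mulVecLin
  rw [show Module.finrank ℝ (LinearMap.range A.mulVecLin) = A.rank from rfl, hA,
    Module.finrank_pi ℝ] at h1
  simp only [Fintype.card_fin] at h1
  have hker : LinearMap.ker A.mulVecLin = ⊥ := Submodule.finrank_eq_zero.mp (by omega)
  intro x hx
  have : x ∈ LinearMap.ker A.mulVecLin := by simpa [Matrix.mulVecLin] using hx
  simpa [hker] using this

lemma aux_posdef {n d : ℕ} (A : Matrix (Fin n) (Fin d) ℝ) (hA : A.rank = d)
    (D : Fin n → ℝ) (hD : ∀ j, 0 < D j) : (Aᵀ * Matrix.diagonal D * A).PosDef := by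
  have hpsd : (Aᵀ * Matrix.diagonal D * A).PosSemidef := by
    have := (Matrix.posSemidef_diagonal_iff.mpr fun j => (hD j).le).conjTranspose_mul_mul_same A
    rwa [Matrix.conjTranspose_eq_transpose_of_trivial] at this
  refine .of_dotProduct_mulVec_pos hpsd.1 fun x hx => ?_
  have hAx : A.mulVec x ≠ 0 := fun h => hx (aux_inj A hA x h)
  obtain ⟨j0, hj0⟩ : ∃ j, A.mulVec x j ≠ 0 := by
    by_contra h; push_neg at h; exact hAx (funext h)
  have : (0:ℝ) < ∑ j, D j * (A.mulVec x j)^2 := by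
    apply Finset.sum_pos' (fun j _ => mul_nonneg (hD j).le (sq_nonneg _))
    exact ⟨j0, Finset.mem_univ _, mul_pos (hD j0) (by positivity)⟩
  simpa [aux_quad] using this


lemma aux_sym {d : ℕ} (M : Matrix (Fin d) (Fin d) ℝ) (hM : M.IsHermitian)
    (a b : Fin d → ℝ) : a ⬝ᵥ M.mulVec b = b ⬝ᵥ M.mulVec a := by
  have hMt : Mᵀ = M := by
    rw [← Matrix.conjTranspose_eq_transpose_of_trivial]; exact hM
  rw [dotProduct_mulVec, ← hMt, vecMul_transpose, hMt, dotProduct_comm]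

lemma aux_cs {d : ℕ} (M : Matrix (Fin d) (Fin d) ℝ) (hM : M.PosSemidef)
    (x y : Fin d → ℝ) :
    (x ⬝ᵥ M.mulVec y)^2 ≤ (x ⬝ᵥ M.mulVec x) * (y ⬝ᵥ M.mulVec y) := by
  set Bxx := x ⬝ᵥ M.mulVec x
  set Bxy := x ⬝ᵥ M.mulVec y
  set Byy := y ⬝ᵥ M.mulVec y
  have key : ∀ t : ℝ, 0 ≤ Byy * (t * t) + (2 * Bxy) * t + Bxx := by
    intro t
    have h0 := hM.dotProduct_mulVec_nonneg (x + t • y)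
    have hyx : y ⬝ᵥ M.mulVec x = Bxy := aux_sym M hM.1 y x
    simp only [mulVec_add, mulVec_smul, dotProduct_add, add_dotProduct,
      smul_dotProduct, dotProduct_smul, smul_eq_mul, star_trivial] at h0
    rw [hyx] at h0
    nlinarith [h0]
  have := discrim_le_zero key
  rw [discrim] at this
  nlinarith [this]

lemma aux_inv_le {d : ℕ} (M N : Matrix (Fin d) (Fin d) ℝ) (hM : M.PosDef) (hN : N.PosDef)
    (h : (N - M).PosSemidef) (v : Fin d → ℝ) :
    v ⬝ᵥ N⁻¹.mulVec v ≤ v ⬝ᵥ M⁻¹.mulVec v := by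
  set x := N⁻¹.mulVec v with hx
  set y := M⁻¹.mulVec v with hy
  have hMy : M.mulVec y = v := by
    rw [hy, mulVec_mulVec, mul_nonsing_inv _ (isUnit_iff_isUnit_det _ |>.mp hM.isUnit), one_mulVec]
  have hNx : N.mulVec x = v := by
    rw [hx, mulVec_mulVec, mul_nonsing_inv _ (isUnit_iff_isUnit_det _ |>.mp hN.isUnit), one_mulVec]
  set q := v ⬝ᵥ N⁻¹.mulVec v with hq
  set Q := v ⬝ᵥ M⁻¹.mulVec v with hQ
  have hxv : x ⬝ᵥ v = q := by rw [hq, ← hx, dotProduct_comm]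
  have hyv : y ⬝ᵥ v = Q := by rw [hQ, ← hy, dotProduct_comm]
  have hBxy : x ⬝ᵥ M.mulVec y = q := by rw [hMy, hxv]
  have hByy : y ⬝ᵥ M.mulVec y = Q := by rw [hMy, hyv]
  have hBxx_le : x ⬝ᵥ M.mulVec x ≤ q := by
    have h0 := h.dotProduct_mulVec_nonneg x
    simp only [sub_mulVec, dotProduct_sub, star_trivial] at h0
    rw [hNx, hxv] at h0
    linarith
  have hBxx_nn : 0 ≤ x ⬝ᵥ M.mulVec x := by simpa using hM.posSemidef.dotProduct_mulVec_nonneg x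
  have hQnn : 0 ≤ Q := by rw [← hByy]; simpa using hM.posSemidef.dotProduct_mulVec_nonneg y
  have hcs := aux_cs M hM.posSemidef x y
  rw [hBxy, hByy] at hcs
  nlinarith [hcs, hBxx_le, hBxx_nn, hQnn]


lemma aux_diff {n d : ℕ} (A : Matrix (Fin n) (Fin d) ℝ) (D₁ D₂ : Fin n → ℝ)
    (h : ∀ j, D₁ j ≤ D₂ j) :
    ((Aᵀ * Matrix.diagonal D₂ * A) - (Aᵀ * Matrix.diagonal D₁ * A)).PosSemidef := by
  have heq : (Aᵀ * Matrix.diagonal D₂ * A) - (Aᵀ * Matrix.diagonal D₁ * A)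
      = Aᵀ * Matrix.diagonal (fun j => D₂ j - D₁ j) * A := by
    rw [← Matrix.diagonal_sub, Matrix.mul_sub, Matrix.sub_mul]
  rw [heq]
  have := (Matrix.posSemidef_diagonal_iff.mpr
    (fun j => sub_nonneg.mpr (h j)) : (Matrix.diagonal (fun j => D₂ j - D₁ j)).PosSemidef).conjTranspose_mul_mul_same A
  rwa [Matrix.conjTranspose_eq_transpose_of_trivial] at this

lemma aux_scale {n d : ℕ} (A : Matrix (Fin n) (Fin d) ℝ) (D : Fin n → ℝ) (c : ℝ) (hc : c ≠ 0)
    (hdet : IsUnit (Aᵀ * Matrix.diagonal D * A).det) (v : Fin d → ℝ) :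
    v ⬝ᵥ (Aᵀ * Matrix.diagonal (fun j => c * D j) * A)⁻¹.mulVec v
      = c⁻¹ * (v ⬝ᵥ (Aᵀ * Matrix.diagonal D * A)⁻¹.mulVec v) := by
  have hM : Aᵀ * Matrix.diagonal (fun j => c * D j) * A
      = c • (Aᵀ * Matrix.diagonal D * A) := by
    rw [show (fun j => c * D j) = c • D from rfl, Matrix.diagonal_smul, Matrix.mul_smul,
      Matrix.smul_mul]
  have hinv : (c • (Aᵀ * Matrix.diagonal D * A))⁻¹
      = c⁻¹ • (Aᵀ * Matrix.diagonal D * A)⁻¹ := by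
    apply Matrix.inv_eq_right_inv
    rw [Matrix.smul_mul, Matrix.mul_smul, smul_smul, mul_inv_cancel₀ hc, one_smul,
      mul_nonsing_inv _ hdet]
  rw [hM, hinv, smul_mulVec, dotProduct_smul, smul_eq_mul]
theorem stmt11 {n d : ℕ} (A : Matrix (Fin n) (Fin d) ℝ) (hA : A.rank = d)
    (p α : ℝ) (hp : 0 < p) (hp4 : p < 4) (hα : 1 ≤ α)
    (wbar w : Fin n → ℝ) (hwbar : ∀ i, 0 < wbar i) (hw : ∀ i, 0 < w i)
    (hlewis : ∀ i,
      A i ⬝ᵥ (Aᵀ * Matrix.diagonal (fun j => wbar j ^ (1 - 2 / p)) * A)⁻¹.mulVec (A i)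
        = wbar i ^ (2 / p))
    (halmost : ∀ i,
      (1 / α) * w i ^ (2 / p)
          ≤ A i ⬝ᵥ (Aᵀ * Matrix.diagonal (fun j => w j ^ (1 - 2 / p)) * A)⁻¹.mulVec (A i) ∧
        A i ⬝ᵥ (Aᵀ * Matrix.diagonal (fun j => w j ^ (1 - 2 / p)) * A)⁻¹.mulVec (A i)
          ≤ α * w i ^ (2 / p)) :
    ∀ i,
      (1 / α ^ ((p / 2) / (1 - |p / 2 - 1|))) * wbar i ≤ w i ∧
        w i ≤ α ^ ((p / 2) / (1 - |p / 2 - 1|)) * wbar i := by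
  set t : ℝ := 1 - 2 / p with ht
  set τ : ℝ := |t| with hτdef
  set c : ℝ := (p / 2) / (1 - |p / 2 - 1|) with hcdef
  have hα0 : (0:ℝ) < α := lt_of_lt_of_le one_pos hα
  have h2p : (0:ℝ) < 2 / p := by positivity
  intro i
  obtain ⟨i0, -, hmax0⟩ := Finset.exists_max_image Finset.univ
    (fun j => w j / wbar j) ⟨i, Finset.mem_univ i⟩
  obtain ⟨i1, -, hmin0⟩ := Finset.exists_min_image Finset.univ
    (fun j => w j / wbar j) ⟨i, Finset.mem_univ i⟩
  have hmax : ∀ j, w j / wbar j ≤ w i0 / wbar i0 := fun j => hmax0 j (Finset.mem_univ j)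
  have hmin : ∀ j, w i1 / wbar i1 ≤ w j / wbar j := fun j => hmin0 j (Finset.mem_univ j)
  set r : ℝ := w i0 / wbar i0 with hrdef
  set s : ℝ := w i1 / wbar i1 with hsdef
  have hr : 0 < r := div_pos (hw i0) (hwbar i0)
  have hs : 0 < s := div_pos (hw i1) (hwbar i1)
  have hrs : s ≤ r := hmin i0
  set ρ : ℝ := max r s⁻¹ with hρdef
  have hρr : r ≤ ρ := le_max_left _ _
  have hρs : s⁻¹ ≤ ρ := le_max_right _ _
  have hρpos : 0 < ρ := lt_of_lt_of_le hr hρr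
  have hρ1 : 1 ≤ ρ := by
    have e1 : s * s⁻¹ = 1 := mul_inv_cancel₀ hs.ne'
    have e2 : s * s⁻¹ ≤ r * s⁻¹ :=
      mul_le_mul_of_nonneg_right hrs (inv_nonneg.mpr hs.le)
    have e3 : r * s⁻¹ ≤ ρ * ρ :=
      mul_le_mul hρr hρs (inv_nonneg.mpr hs.le) hρpos.le
    nlinarith [hρpos]
  have hub : ∀ j, w j ≤ ρ * wbar j := by
    intro j
    exact (div_le_iff₀ (hwbar j)).mp (le_trans (hmax j) hρr)
  have hlb : ∀ j, wbar j ≤ ρ * w j := by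
    intro j
    have hx : 1 ≤ ρ * s := by
      have := mul_le_mul_of_nonneg_right hρs hs.le
      rwa [inv_mul_cancel₀ hs.ne'] at this
    have hsw : s * wbar j ≤ w j := (le_div_iff₀ (hwbar j)).mp (hmin j)
    nlinarith [mul_le_mul_of_nonneg_left hsw hρpos.le,
      mul_le_mul_of_nonneg_right hx (hwbar j).le]
  have hρτpos : 0 < ρ ^ τ := Real.rpow_pos_of_pos hρpos τ
  have hpow : ∀ (u v : Fin n → ℝ), (∀ j, 0 < u j) → (∀ j, 0 < v j) →
      (∀ j, u j ≤ ρ * v j) → (∀ j, v j ≤ ρ * u j) →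
      ∀ j, u j ^ t ≤ ρ ^ τ * v j ^ t := by
    intro u v hu hv huv hvu j
    rcases le_or_gt 0 t with h0 | h0
    · have hτt : τ = t := abs_of_nonneg h0
      calc u j ^ t ≤ (ρ * v j) ^ t := Real.rpow_le_rpow (hu j).le (huv j) h0
        _ = ρ ^ t * v j ^ t := Real.mul_rpow hρpos.le (hv j).le
        _ = ρ ^ τ * v j ^ t := by rw [hτt]
    · have hτt : τ = -t := abs_of_neg h0
      have h1 : v j / ρ ≤ u j := by
        rw [div_le_iff₀ hρpos]
        nlinarith [hvu j, hu j, hρpos]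
      calc u j ^ t ≤ (v j / ρ) ^ t :=
            Real.rpow_le_rpow_of_nonpos (div_pos (hv j) hρpos) h1 h0.le
        _ = v j ^ t / ρ ^ t := Real.div_rpow (hv j).le hρpos.le t
        _ = ρ ^ τ * v j ^ t := by
            rw [hτt, Real.rpow_neg hρpos.le, div_eq_mul_inv, mul_comm]
  have hDwpos : ∀ j, (0:ℝ) < w j ^ t := fun j => Real.rpow_pos_of_pos (hw j) t
  have hDbpos : ∀ j, (0:ℝ) < wbar j ^ t := fun j => Real.rpow_pos_of_pos (hwbar j) t
  have hMw := aux_posdef A hA _ hDwpos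
  have hMbdet : IsUnit (Aᵀ * Matrix.diagonal (fun j => wbar j ^ t) * A).det :=
    (aux_posdef A hA _ hDbpos).det_pos.ne'.isUnit
  have hq_ub : ∀ j, A j ⬝ᵥ (Aᵀ * Matrix.diagonal (fun j => w j ^ t) * A)⁻¹.mulVec (A j)
      ≤ ρ ^ τ * wbar j ^ (2 / p) := by
    intro j
    have hlow : ∀ k, (ρ ^ τ)⁻¹ * wbar k ^ t ≤ w k ^ t := by
      intro k
      have h1 := hpow wbar w hwbar hw hlb hub k
      have h2 := mul_le_mul_of_nonneg_left h1 (inv_nonneg.mpr hρτpos.le)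
      rwa [← mul_assoc, inv_mul_cancel₀ hρτpos.ne', one_mul] at h2
    have hM1 := aux_posdef A hA (fun k => (ρ ^ τ)⁻¹ * wbar k ^ t)
      (fun k => mul_pos (inv_pos.mpr hρτpos) (hDbpos k))
    have hcomp := aux_inv_le _ _ hM1 hMw (aux_diff A _ _ hlow) (A j)
    rwa [aux_scale A _ _ (inv_ne_zero hρτpos.ne') hMbdet, inv_inv, hlewis j] at hcomp
  have hq_lb : ∀ j, (ρ ^ τ)⁻¹ * wbar j ^ (2 / p)
      ≤ A j ⬝ᵥ (Aᵀ * Matrix.diagonal (fun j => w j ^ t) * A)⁻¹.mulVec (A j) := by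
    intro j
    have hhigh : ∀ k, w k ^ t ≤ ρ ^ τ * wbar k ^ t := hpow w wbar hw hwbar hub hlb
    have hM2 := aux_posdef A hA (fun k => ρ ^ τ * wbar k ^ t)
      (fun k => mul_pos hρτpos (hDbpos k))
    have hcomp := aux_inv_le _ _ hMw hM2 (aux_diff A _ _ hhigh) (A j)
    rwa [aux_scale A _ _ hρτpos.ne' hMbdet, hlewis j] at hcomp
  have hwi0 : w i0 = r * wbar i0 := by
    rw [hrdef, div_mul_cancel₀ _ (hwbar i0).ne']
  have hwi1 : w i1 = s * wbar i1 := by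
    rw [hsdef, div_mul_cancel₀ _ (hwbar i1).ne']
  have hWb0 : (0:ℝ) < wbar i0 ^ (2 / p) := Real.rpow_pos_of_pos (hwbar i0) _
  have hWb1 : (0:ℝ) < wbar i1 ^ (2 / p) := Real.rpow_pos_of_pos (hwbar i1) _
  have h_r : r ^ (2 / p) ≤ α * ρ ^ τ := by
    have h1 := (halmost i0).1
    have h2 := hq_ub i0
    rw [hwi0, Real.mul_rpow hr.le (hwbar i0).le, one_div] at h1
    have h3 : r ^ (2 / p) * wbar i0 ^ (2 / p) ≤ α * (ρ ^ τ * wbar i0 ^ (2 / p)) :=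
      (inv_mul_le_iff₀ hα0).mp (le_trans h1 h2)
    have h4 : r ^ (2 / p) * wbar i0 ^ (2 / p) ≤ α * ρ ^ τ * wbar i0 ^ (2 / p) := by
      rw [mul_assoc]; exact h3
    exact le_of_mul_le_mul_right h4 hWb0
  have h_s : (s⁻¹) ^ (2 / p) ≤ α * ρ ^ τ := by
    have h1 := hq_lb i1
    have h2 := (halmost i1).2
    rw [hwi1, Real.mul_rpow hs.le (hwbar i1).le] at h2
    have h3 : (ρ ^ τ)⁻¹ * wbar i1 ^ (2 / p) ≤ α * s ^ (2 / p) * wbar i1 ^ (2 / p) := by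
      rw [mul_assoc]; exact le_trans h1 h2
    have hsp : (0:ℝ) < s ^ (2 / p) := Real.rpow_pos_of_pos hs _
    have h4 : (ρ ^ τ)⁻¹ ≤ α * s ^ (2 / p) := le_of_mul_le_mul_right h3 hWb1
    have h5 := mul_le_mul_of_nonneg_left h4
      (mul_nonneg hρτpos.le (inv_nonneg.mpr hsp.le))
    rw [Real.inv_rpow hs.le]
    calc (s ^ (2 / p))⁻¹ = ρ ^ τ * (ρ ^ τ)⁻¹ * (s ^ (2 / p))⁻¹ := by
          rw [mul_inv_cancel₀ hρτpos.ne', one_mul]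
      _ = ρ ^ τ * (s ^ (2 / p))⁻¹ * (ρ ^ τ)⁻¹ := by ring
      _ ≤ ρ ^ τ * (s ^ (2 / p))⁻¹ * (α * s ^ (2 / p)) := h5
      _ = α * ρ ^ τ * ((s ^ (2 / p))⁻¹ * s ^ (2 / p)) := by ring
      _ = α * ρ ^ τ := by rw [inv_mul_cancel₀ hsp.ne', mul_one]
  have hρ2 : ρ ^ (2 / p) ≤ α * ρ ^ τ := by
    rcases max_choice r s⁻¹ with h | h
    · have hh : ρ = r := by rw [hρdef, h]
      nth_rewrite 1 [hh]; exact h_r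
    · have hh : ρ = s⁻¹ := by rw [hρdef, h]
      nth_rewrite 1 [hh]; exact h_s
  have hτlt : τ < 2 / p := by
    have h41 : (1:ℝ) < 4 / p := by rw [lt_div_iff₀ hp]; linarith
    have h4p : (4:ℝ) / p = 2 / p + 2 / p := by ring
    rw [hτdef, ht]
    apply abs_lt.mpr
    constructor <;> linarith
  have he : (0:ℝ) < 2 / p - τ := by linarith
  have hρe : ρ ^ (2 / p - τ) ≤ α := by
    have hmulr : ρ ^ (2 / p - τ) * ρ ^ τ = ρ ^ (2 / p) := by
      rw [← Real.rpow_add hρpos]; congr 1; ring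
    have h6 : ρ ^ (2 / p - τ) * ρ ^ τ ≤ α * ρ ^ τ := by rw [hmulr]; exact hρ2
    exact le_of_mul_le_mul_right h6 hρτpos
  have hce : c = (2 / p - τ)⁻¹ := by
    have hmul : (2:ℝ) / p * (p / 2 - 1) = 1 - 2 / p := by field_simp
    have habs : |(1:ℝ) - 2 / p| = 2 / p * |p / 2 - 1| := by
      rw [← hmul, abs_mul, abs_of_pos h2p]
    have hq1 : |p / 2 - 1| < 1 := abs_lt.mpr ⟨by linarith, by linarith⟩
    rw [hcdef, hτdef, ht, habs,
      show 2 / p - 2 / p * |p / 2 - 1| = 2 / p * (1 - |p / 2 - 1|) by ring,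
      mul_inv, inv_div, div_eq_mul_inv]
  have hρc : ρ ≤ α ^ c := by
    rw [hce]
    calc ρ = (ρ ^ (2 / p - τ)) ^ (2 / p - τ)⁻¹ := by
          rw [← Real.rpow_mul hρpos.le, mul_inv_cancel₀ (ne_of_gt he), Real.rpow_one]
      _ ≤ α ^ (2 / p - τ)⁻¹ :=
          Real.rpow_le_rpow (Real.rpow_nonneg hρpos.le _) hρe (inv_nonneg.mpr he.le)
  have hαc : 0 < α ^ c := Real.rpow_pos_of_pos hα0 c
  constructor
  · have h5 : wbar i ≤ α ^ c * w i :=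
      le_trans (hlb i) (mul_le_mul_of_nonneg_right hρc (hw i).le)
    have h6 := mul_le_mul_of_nonneg_left h5 (le_of_lt (one_div_pos.mpr hαc))
    calc (1 / α ^ c) * wbar i ≤ (1 / α ^ c) * (α ^ c * w i) := h6
      _ = w i := by rw [one_div, ← mul_assoc, inv_mul_cancel₀ hαc.ne', one_mul]
  · exact le_trans (hub i) (mul_le_mul_of_nonneg_right hρc (hwbar i).le)
end

section
/- For 0 < p ≤ 2, ℓ_p Lewis weights are monotone: if A' is obtained from A by appending an extra row, then for every row of A, its Lewis weight with respect to A' is at most its Lewis weight with respect to A. -/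
open Matrix

private lemma quadForm_eq {m d : ℕ} (B : Matrix (Fin m) (Fin d) ℝ) (c : Fin m → ℝ)
    (x : Fin d → ℝ) :
    x ⬝ᵥ (Bᵀ * Matrix.diagonal c * B).mulVec x = ∑ i, c i * (B.mulVec x i) ^ 2 := by
  rw [← Matrix.mulVec_mulVec, ← Matrix.mulVec_mulVec, Matrix.dotProduct_mulVec,
    Matrix.vecMul_transpose]
  simp only [dotProduct, Matrix.mulVec_diagonal]
  exact Finset.sum_congr rfl fun i _ => by ring

private lemma posDef_of_inj {m d : ℕ} (B : Matrix (Fin m) (Fin d) ℝ) (c : Fin m → ℝ)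
    (hc : ∀ i, 0 < c i) (hinj : ∀ x : Fin d → ℝ, B.mulVec x = 0 → x = 0) :
    (Bᵀ * Matrix.diagonal c * B).PosDef := by
  refine Matrix.posDef_iff_dotProduct_mulVec.mpr ⟨?_, ?_⟩
  · have hD : (Matrix.diagonal c).IsHermitian := by
      apply Matrix.isHermitian_diagonal_of_self_adjoint
      funext i; exact star_trivial _
    have h2 := Matrix.isHermitian_conjTranspose_mul_mul B hD
    simpa [Matrix.conjTranspose_eq_transpose_of_trivial] using h2
  · intro x hx
    have hBx : B.mulVec x ≠ 0 := fun h => hx (hinj x h)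
    obtain ⟨j, hj⟩ := Function.ne_iff.mp hBx
    have : (0:ℝ) < ∑ i, c i * (B.mulVec x i) ^ 2 := by
      apply Finset.sum_pos' (fun i _ => mul_nonneg (hc i).le (sq_nonneg _))
      exact ⟨j, Finset.mem_univ j, mul_pos (hc j) (pow_two_pos_of_ne_zero hj)⟩
    simpa [quadForm_eq] using this

private lemma mulVec_inv_cancel {d : ℕ} {M : Matrix (Fin d) (Fin d) ℝ} (hM : M.PosDef)
    (x : Fin d → ℝ) : M.mulVec (M⁻¹.mulVec x) = x := by
  rw [Matrix.mulVec_mulVec, Matrix.mul_nonsing_inv _ hM.det_pos.ne'.isUnit, Matrix.one_mulVec]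

private lemma quad_nonneg {d : ℕ} {M : Matrix (Fin d) (Fin d) ℝ} (hM : M.PosDef)
    (x : Fin d → ℝ) : 0 ≤ x ⬝ᵥ M.mulVec x := by
  simpa using hM.posSemidef.dotProduct_mulVec_nonneg x

private lemma quad_symm {d : ℕ} {M : Matrix (Fin d) (Fin d) ℝ} (hM : M.PosDef)
    (u v : Fin d → ℝ) : u ⬝ᵥ M.mulVec v = v ⬝ᵥ M.mulVec u := by
  have hs : Mᵀ = M := (by simpa using hM.isHermitian : M.IsSymm)
  rw [Matrix.dotProduct_mulVec, ← Matrix.mulVec_transpose, hs, dotProduct_comm]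

/-- Loewner anti-monotonicity of the inverse, quadratic-form version. -/
private lemma inv_quad_le {d : ℕ} {M N : Matrix (Fin d) (Fin d) ℝ}
    (hM : M.PosDef) (hN : N.PosDef)
    (h : ∀ x, x ⬝ᵥ M.mulVec x ≤ x ⬝ᵥ N.mulVec x) (x : Fin d → ℝ) :
    x ⬝ᵥ N⁻¹.mulVec x ≤ x ⬝ᵥ M⁻¹.mulVec x := by
  set u := N⁻¹.mulVec x with hu
  set v := M⁻¹.mulVec x with hv
  have hNu : N.mulVec u = x := mulVec_inv_cancel hN x
  have hMv : M.mulVec v = x := mulVec_inv_cancel hM x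
  -- x ⬝ N⁻¹ x = 2 u⬝x - u⬝Nu
  have e1 : x ⬝ᵥ N⁻¹.mulVec x = u ⬝ᵥ x := dotProduct_comm _ _
  have e2 : u ⬝ᵥ N.mulVec u = u ⬝ᵥ x := by rw [hNu]
  have e3 : x ⬝ᵥ M⁻¹.mulVec x = v ⬝ᵥ x := dotProduct_comm _ _
  -- completing the square for M
  have key : 0 ≤ (u - v) ⬝ᵥ M.mulVec (u - v) := quad_nonneg hM _
  have expand : (u - v) ⬝ᵥ M.mulVec (u - v)
      = u ⬝ᵥ M.mulVec u - u ⬝ᵥ x - (u ⬝ᵥ x) + v ⬝ᵥ x := by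
    have huMv : u ⬝ᵥ M.mulVec v = u ⬝ᵥ x := by rw [hMv]
    have hvMu : v ⬝ᵥ M.mulVec u = u ⬝ᵥ x := by rw [quad_symm hM, huMv]
    have hvMv : v ⬝ᵥ M.mulVec v = v ⬝ᵥ x := by rw [hMv]
    rw [Matrix.mulVec_sub, dotProduct_sub, sub_dotProduct, sub_dotProduct,
      huMv, hvMu, hvMv]
    ring
  have hMN := h u
  -- combine
  have : u ⬝ᵥ x - u ⬝ᵥ N.mulVec u + u ⬝ᵥ x ≤ v ⬝ᵥ x := by nlinarith [expand, key, hMN]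
  rw [e1, e3]
  calc u ⬝ᵥ x = u ⬝ᵥ x - u ⬝ᵥ N.mulVec u + u ⬝ᵥ x := by rw [e2]; ring
    _ ≤ v ⬝ᵥ x := this

private lemma smul_posDef {d : ℕ} {M : Matrix (Fin d) (Fin d) ℝ} (hM : M.PosDef)
    {s : ℝ} (hs : 0 < s) : (s • M).PosDef := by
  refine Matrix.posDef_iff_dotProduct_mulVec.mpr ⟨?_, ?_⟩
  · have := hM.isHermitian
    simpa [Matrix.IsHermitian] using congrArg (s • ·) this
  · intro x hx
    have := hM.dotProduct_mulVec_pos hx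
    have h2 : x ⬝ᵥ (s • M).mulVec x = s * (x ⬝ᵥ M.mulVec x) := by
      rw [Matrix.smul_mulVec, dotProduct_smul, smul_eq_mul]
    simp only [star_trivial] at this ⊢
    rw [h2]
    exact mul_pos hs this

private lemma inv_smul_eq {d : ℕ} {M : Matrix (Fin d) (Fin d) ℝ} (hM : M.PosDef)
    {s : ℝ} (hs : 0 < s) : (s • M)⁻¹ = s⁻¹ • M⁻¹ := by
  apply Matrix.inv_eq_right_inv
  rw [Matrix.smul_mul, Matrix.mul_smul, Matrix.mul_nonsing_inv _ hM.det_pos.ne'.isUnit,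
    smul_smul, mul_inv_cancel₀ hs.ne', one_smul]

theorem stmt12 {n d : ℕ} (A : Matrix (Fin n) (Fin d) ℝ) (A' : Matrix (Fin (n + 1)) (Fin d) ℝ)
    (hA : A.rank = d) (hrows : ∀ i : Fin n, A' i.castSucc = A i)
    (p : ℝ) (hp : 0 < p) (hp2 : p ≤ 2)
    (w : Fin n → ℝ) (w' : Fin (n + 1) → ℝ)
    (hw : ∀ i, 0 < w i) (hw' : ∀ i, 0 < w' i)
    (hlewis : ∀ i,
      (A i ⬝ᵥ (Aᵀ * Matrix.diagonal (fun j => w j ^ (1 - 2 / p)) * A)⁻¹.mulVec (A i)) ^ (p / 2)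
        = w i)
    (hlewis' : ∀ i,
      (A' i ⬝ᵥ (A'ᵀ * Matrix.diagonal (fun j => w' j ^ (1 - 2 / p)) * A')⁻¹.mulVec (A' i)) ^ (p / 2)
        = w' i) :
    ∀ i : Fin n, w' i.castSucc ≤ w i := by
  intro i0
  have hnE : Nonempty (Fin n) := ⟨i0⟩
  -- injectivity of A from full column rank
  have hAinj : ∀ x : Fin d → ℝ, A.mulVec x = 0 → x = 0 := by
    have hk : LinearMap.ker A.mulVecLin = ⊥ := by
      have h1 := LinearMap.finrank_range_add_finrank_ker A.mulVecLin
      have h2 : Module.finrank ℝ (Fin d → ℝ) = d := by simp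
      rw [h2] at h1
      have h3 : Module.finrank ℝ (LinearMap.range A.mulVecLin) = d := hA
      have h4 : Module.finrank ℝ (LinearMap.ker A.mulVecLin) = 0 := by omega
      exact Submodule.finrank_eq_zero.mp h4
    intro x hx
    have : A.mulVecLin x = 0 := by simpa [Matrix.mulVecLin_apply] using hx
    simpa using (LinearMap.ker_eq_bot.mp hk) (by simpa using this)
  have hA'inj : ∀ x : Fin d → ℝ, A'.mulVec x = 0 → x = 0 := by
    intro x hx
    apply hAinj
    funext i
    have : A'.mulVec x i.castSucc = 0 := by rw [hx]; rfl
    simpa [Matrix.mulVec, hrows i] using this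
  set c : ℝ := 1 - 2 / p with hcdef
  have hc : c ≤ 0 := by
    have : 1 ≤ 2 / p := (le_div_iff₀ hp).mpr (by linarith)
    simp [hcdef]; linarith
  set u : Fin n → ℝ := fun i => w' i.castSucc with hudef
  have hu : ∀ i, 0 < u i := fun i => hw' _
  -- matrices
  set Mw : Matrix (Fin d) (Fin d) ℝ := Aᵀ * Matrix.diagonal (fun j => w j ^ c) * A with hMwdef
  set Mu : Matrix (Fin d) (Fin d) ℝ := Aᵀ * Matrix.diagonal (fun j => u j ^ c) * A with hMudef
  set M' : Matrix (Fin d) (Fin d) ℝ :=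
    A'ᵀ * Matrix.diagonal (fun j => w' j ^ c) * A' with hM'def
  have hMw : Mw.PosDef := posDef_of_inj A _ (fun i => Real.rpow_pos_of_pos (hw i) c) hAinj
  have hMu : Mu.PosDef := posDef_of_inj A _ (fun i => Real.rpow_pos_of_pos (hu i) c) hAinj
  have hM' : M'.PosDef := posDef_of_inj A' _ (fun i => Real.rpow_pos_of_pos (hw' i) c) hA'inj
  -- Step A : u i ≤ T_A(u) i
  have hAx : ∀ (x : Fin d → ℝ) (i : Fin n), A'.mulVec x i.castSucc = A.mulVec x i := by
    intro x i
    simp [Matrix.mulVec, hrows i]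
  have stepA : ∀ i : Fin n, u i ≤ (A i ⬝ᵥ Mu⁻¹.mulVec (A i)) ^ (p / 2) := by
    intro i
    have hcomp : ∀ x, x ⬝ᵥ Mu.mulVec x ≤ x ⬝ᵥ M'.mulVec x := by
      intro x
      rw [hMudef, hM'def, quadForm_eq, quadForm_eq, Fin.sum_univ_castSucc]
      have : ∀ j : Fin n, u j ^ c * (A.mulVec x j) ^ 2
          = w' j.castSucc ^ c * (A'.mulVec x j.castSucc) ^ 2 := by
        intro j; rw [hAx x j]
      simp only [this]
      have hlast : 0 ≤ w' (Fin.last n) ^ c * (A'.mulVec x (Fin.last n)) ^ 2 :=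
        mul_nonneg (Real.rpow_pos_of_pos (hw' _) c).le (sq_nonneg _)
      linarith
    have hq := inv_quad_le hMu hM' hcomp (A i)
    have : u i = (A i ⬝ᵥ M'⁻¹.mulVec (A i)) ^ (p / 2) := by
      rw [hudef]
      have := hlewis' i.castSucc
      rw [hrows i] at this
      exact this.symm
    rw [this]
    exact Real.rpow_le_rpow (quad_nonneg hM'.inv _) hq (by positivity)
  -- Step B : the maximal ratio
  set t : ℝ := Finset.univ.sup' Finset.univ_nonempty (fun i => u i / w i) with htdef
  obtain ⟨i1, _, hi1⟩ := Finset.exists_mem_eq_sup' Finset.univ_nonempty (fun i => u i / w i)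
  have ht0 : 0 < t := by
    have := Finset.le_sup' (fun i => u i / w i) (Finset.mem_univ i0)
    exact lt_of_lt_of_le (div_pos (hu i0) (hw i0)) this
  have hle : ∀ j, u j ≤ t * w j := by
    intro j
    have h2 : u j / w j ≤ t := Finset.le_sup' (fun i => u i / w i) (Finset.mem_univ j)
    exact (div_le_iff₀ (hw j)).mp h2
  -- compare Mu with t^c • Mw
  have hcomp2 : ∀ x, x ⬝ᵥ (t ^ c • Mw).mulVec x ≤ x ⬝ᵥ Mu.mulVec x := by
    intro x
    have hsm : x ⬝ᵥ (t ^ c • Mw).mulVec x = t ^ c * (x ⬝ᵥ Mw.mulVec x) := by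
      rw [Matrix.smul_mulVec, dotProduct_smul, smul_eq_mul]
    rw [hsm, hMwdef, hMudef, quadForm_eq, quadForm_eq, Finset.mul_sum]
    apply Finset.sum_le_sum
    intro j _
    have h1 : (t * w j) ^ c ≤ u j ^ c :=
      Real.rpow_le_rpow_of_nonpos (hu j) (hle j) hc
    have h2 : (t * w j) ^ c = t ^ c * w j ^ c := Real.mul_rpow ht0.le (hw j).le
    calc t ^ c * (w j ^ c * (A.mulVec x j) ^ 2) = (t * w j) ^ c * (A.mulVec x j) ^ 2 := by
          rw [h2]; ring
      _ ≤ u j ^ c * (A.mulVec x j) ^ 2 := mul_le_mul_of_nonneg_right h1 (sq_nonneg _)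
  have htc : 0 < t ^ c := Real.rpow_pos_of_pos ht0 c
  have hsMw : (t ^ c • Mw).PosDef := smul_posDef hMw htc
  have stepB : ∀ i : Fin n, (A i ⬝ᵥ Mu⁻¹.mulVec (A i)) ^ (p / 2)
      ≤ t ^ (1 - p / 2) * w i := by
    intro i
    have hq := inv_quad_le hsMw hMu hcomp2 (A i)
    rw [inv_smul_eq hMw htc] at hq
    have hq2 : A i ⬝ᵥ Mu⁻¹.mulVec (A i)
        ≤ t ^ (-c) * (A i ⬝ᵥ Mw⁻¹.mulVec (A i)) := by
      rw [Real.rpow_neg ht0.le]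
      calc A i ⬝ᵥ Mu⁻¹.mulVec (A i) ≤ A i ⬝ᵥ ((t ^ c)⁻¹ • Mw⁻¹).mulVec (A i) := hq
        _ = (t ^ c)⁻¹ * (A i ⬝ᵥ Mw⁻¹.mulVec (A i)) := by
            rw [Matrix.smul_mulVec, dotProduct_smul, smul_eq_mul]
    have hbase : 0 ≤ t ^ (-c) * (A i ⬝ᵥ Mw⁻¹.mulVec (A i)) :=
      mul_nonneg (Real.rpow_pos_of_pos ht0 _).le (quad_nonneg hMw.inv _)
    calc (A i ⬝ᵥ Mu⁻¹.mulVec (A i)) ^ (p / 2)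
        ≤ (t ^ (-c) * (A i ⬝ᵥ Mw⁻¹.mulVec (A i))) ^ (p / 2) :=
          Real.rpow_le_rpow (quad_nonneg hMu.inv _) hq2 (by positivity)
      _ = (t ^ (-c)) ^ (p / 2) * (A i ⬝ᵥ Mw⁻¹.mulVec (A i)) ^ (p / 2) :=
          Real.mul_rpow (Real.rpow_pos_of_pos ht0 _).le (quad_nonneg hMw.inv _)
      _ = t ^ (1 - p / 2) * w i := by
          rw [← Real.rpow_mul ht0.le, hlewis i]
          have hexp : -c * (p / 2) = 1 - p / 2 := by
            rw [hcdef]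
            field_simp
            ring
          rw [hexp]
  -- conclude t ≤ 1
  have hti : u i1 ≤ t ^ (1 - p / 2) * w i1 := le_trans (stepA i1) (stepB i1)
  have hui1 : u i1 = t * w i1 := by
    have h2 : u i1 / w i1 = t := hi1.symm
    rw [← h2, div_mul_cancel₀ _ (hw i1).ne']
  have htle : t ≤ t ^ (1 - p / 2) := by
    rw [hui1] at hti
    have := (mul_le_mul_iff_left₀ (hw i1)).mp hti
    exact this
  have ht1 : t ≤ 1 := by
    by_contra h
    push_neg at h
    have : t ^ (1 - p / 2) < t ^ (1:ℝ) :=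
      Real.rpow_lt_rpow_of_exponent_lt h (by linarith)
    rw [Real.rpow_one] at this
    linarith
  calc w' i0.castSucc = u i0 := rfl
    _ ≤ t * w i0 := hle i0
    _ ≤ 1 * w i0 := mul_le_mul_of_nonneg_right ht1 (hw i0).le
    _ = w i0 := one_mul _
end

section
/- For p > 2, if A' is A with additional rows appended and w̄, w̄' are the respective ℓ_p Lewis weights, then A'ᵀ(W̄')^{1−2/p}A' ⪰ d^{2/p−1} · AᵀW̄^{1−2/p}A in the Loewner order; in particular the Lewis weight of any original row increases by a factor at most d^{p/2−1}. -/
open Matrix Finset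

lemma quadform {n d : ℕ} (A : Matrix (Fin n) (Fin d) ℝ) (u : Fin n → ℝ) (x : Fin d → ℝ) :
    x ⬝ᵥ (Aᵀ * Matrix.diagonal u * A) *ᵥ x = ∑ i, u i * ((A *ᵥ x) i)^2 := by
  rw [← Matrix.mulVec_mulVec, ← Matrix.mulVec_mulVec, Matrix.dotProduct_mulVec,
    Matrix.vecMul_transpose]
  simp [dotProduct, Matrix.mulVec_diagonal]
  exact Finset.sum_congr rfl fun i _ => by ring

lemma symmform {n d : ℕ} (A : Matrix (Fin n) (Fin d) ℝ) (u : Fin n → ℝ) :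
    (Aᵀ * Matrix.diagonal u * A)ᵀ = Aᵀ * Matrix.diagonal u * A := by
  simp [Matrix.transpose_mul, Matrix.diagonal_transpose, Matrix.mul_assoc]

lemma trace_aux {n d : ℕ} (A : Matrix (Fin n) (Fin d) ℝ) (u : Fin n → ℝ)
    (N : Matrix (Fin d) (Fin d) ℝ) :
    ∑ i, u i * (A i ⬝ᵥ N *ᵥ A i) = Matrix.trace (N * (Aᵀ * Matrix.diagonal u * A)) := by
  have h : N * (Aᵀ * Matrix.diagonal u * A) = (N * Aᵀ) * (Matrix.diagonal u * A) := by
    simp only [Matrix.mul_assoc]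
  rw [h, Matrix.trace_mul_comm]
  simp [Matrix.trace, Matrix.mul_apply, Matrix.diagonal, dotProduct, Matrix.mulVec,
    Finset.mul_sum, Finset.sum_mul]
  rw [Finset.sum_comm]
  simp only [mul_assoc]
  exact Finset.sum_comm

lemma mulVec_inj {n d : ℕ} (A : Matrix (Fin n) (Fin d) ℝ) (hA : A.rank = d) :
    ∀ v : Fin d → ℝ, A *ᵥ v = 0 → v = 0 := by
  rw [← Matrix.ker_mulVecLin_eq_bot_iff]
  have h := LinearMap.finrank_range_add_finrank_ker A.mulVecLin
  rw [show Module.finrank ℝ (Fin d → ℝ) = d by simp] at h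
  rw [show A.rank = Module.finrank ℝ (LinearMap.range A.mulVecLin) from rfl] at hA
  have : Module.finrank ℝ (LinearMap.ker A.mulVecLin) = 0 := by omega
  exact Submodule.finrank_eq_zero.mp this

lemma posdef_M {n d : ℕ} (A : Matrix (Fin n) (Fin d) ℝ) (hA : A.rank = d)
    (u : Fin n → ℝ) (hu : ∀ i, 0 < u i) :
    (Aᵀ * Matrix.diagonal u * A).PosDef := by
  refine Matrix.PosDef.of_dotProduct_mulVec_pos (by rw [Matrix.IsHermitian]; simpa using symmform A u) fun x hx => ?_
  simp only [star_trivial]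
  rw [quadform]
  have hAx : A *ᵥ x ≠ 0 := fun h => hx (mulVec_inj A hA x h)
  obtain ⟨i, hi⟩ := Function.ne_iff.mp hAx
  refine Finset.sum_pos' (fun j _ => mul_nonneg (hu j).le (sq_nonneg _))
    ⟨i, Finset.mem_univ i, mul_pos (hu i) (by simpa using sq_pos_of_ne_zero hi)⟩

lemma quad_ineq {d : ℕ} (M : Matrix (Fin d) (Fin d) ℝ) (hM : Mᵀ = M)
    (hpsd : ∀ z, 0 ≤ z ⬝ᵥ M *ᵥ z) (hinv : M * M⁻¹ = 1)
    (a x : Fin d → ℝ) (t : ℝ) :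
    2*t*(a ⬝ᵥ x) - t^2 * (x ⬝ᵥ M *ᵥ x) ≤ a ⬝ᵥ M⁻¹ *ᵥ a := by
  have hMa : M *ᵥ (M⁻¹ *ᵥ a) = a := by rw [Matrix.mulVec_mulVec, hinv, Matrix.one_mulVec]
  have hsym : ∀ v, v ᵥ* M = M *ᵥ v := fun v => by conv_lhs => rw [← hM, Matrix.vecMul_transpose]
  have h0 := hpsd (M⁻¹ *ᵥ a - t • x)
  have e2 : (M⁻¹ *ᵥ a) ⬝ᵥ (M *ᵥ x) = a ⬝ᵥ x := by
    rw [Matrix.dotProduct_mulVec, hsym, hMa]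
  have e1 : (M⁻¹ *ᵥ a) ⬝ᵥ a = a ⬝ᵥ M⁻¹ *ᵥ a := dotProduct_comm _ _
  have e3 : x ⬝ᵥ a = a ⬝ᵥ x := dotProduct_comm _ _
  rw [Matrix.mulVec_sub, Matrix.mulVec_smul, sub_dotProduct, smul_dotProduct,
    dotProduct_sub, dotProduct_smul, dotProduct_sub,
    dotProduct_smul, hMa, e1, e2, e3] at h0
  simp only [smul_eq_mul] at h0
  nlinarith [h0]

lemma cauchyM {d : ℕ} (M : Matrix (Fin d) (Fin d) ℝ) (hM : Mᵀ = M)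
    (hpsd : ∀ z, 0 ≤ z ⬝ᵥ M *ᵥ z) (hinv : M * M⁻¹ = 1)
    (a x : Fin d → ℝ) (hq : 0 < x ⬝ᵥ M *ᵥ x) :
    (a ⬝ᵥ x)^2 ≤ (a ⬝ᵥ M⁻¹ *ᵥ a) * (x ⬝ᵥ M *ᵥ x) := by
  have h := quad_ineq M hM hpsd hinv a x ((a ⬝ᵥ x)/(x ⬝ᵥ M *ᵥ x))
  set s := a ⬝ᵥ x
  set q := x ⬝ᵥ M *ᵥ x
  set r := a ⬝ᵥ M⁻¹ *ᵥ a
  have hqne : q ≠ 0 := ne_of_gt hq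
  have h' := mul_le_mul_of_nonneg_right h hq.le
  have e : (2*(s/q)*s - (s/q)^2*q)*q = s^2 := by field_simp; ring
  rw [e] at h'
  exact h'

theorem stmt13 {n m d : ℕ} (A : Matrix (Fin n) (Fin d) ℝ) (A' : Matrix (Fin m) (Fin d) ℝ)
    (f : Fin n ↪ Fin m) (hA : A.rank = d) (hrows : ∀ i : Fin n, A' (f i) = A i)
    (p : ℝ) (hp : 2 < p)
    (w : Fin n → ℝ) (w' : Fin m → ℝ)
    (hw : ∀ i, 0 < w i) (hw' : ∀ i, 0 < w' i)
    (hlewis : ∀ i,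
      (A i ⬝ᵥ (Aᵀ * Matrix.diagonal (fun j => w j ^ (1 - 2 / p)) * A)⁻¹.mulVec (A i)) ^ (p / 2)
        = w i)
    (hlewis' : ∀ i,
      (A' i ⬝ᵥ (A'ᵀ * Matrix.diagonal (fun j => w' j ^ (1 - 2 / p)) * A')⁻¹.mulVec (A' i)) ^ (p / 2)
        = w' i) :
    (A'ᵀ * Matrix.diagonal (fun j => w' j ^ (1 - 2 / p)) * A'
        - ((d : ℝ) ^ (2 / p - 1)) • (Aᵀ * Matrix.diagonal (fun j => w j ^ (1 - 2 / p)) * A)).PosSemidef ∧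
      ∀ i : Fin n, w' (f i) ≤ (d : ℝ) ^ (p / 2 - 1) * w i := by
  classical
  have hp0 : (0:ℝ) < p := by linarith
  have hpne : p ≠ 0 := ne_of_gt hp0
  set u : Fin n → ℝ := fun j => w j ^ (1 - 2 / p) with hu_def
  set u' : Fin m → ℝ := fun j => w' j ^ (1 - 2 / p) with hu'_def
  set M : Matrix (Fin d) (Fin d) ℝ := Aᵀ * Matrix.diagonal u * A with hM_def
  set M' : Matrix (Fin d) (Fin d) ℝ := A'ᵀ * Matrix.diagonal u' * A' with hM'_def
  -- degenerate case
  rcases Nat.eq_zero_or_pos n with hn | hn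
  · have hd0 : d = 0 := by
      have := Matrix.rank_le_card_height A
      simp [hn] at this
      omega
    subst hd0
    constructor
    · refine ⟨Subsingleton.elim _ _, fun x => ?_⟩
      simp [Subsingleton.elim x 0]
    · intro i
      exact absurd i.isLt (by omega)
  have hupos : ∀ i, 0 < u i := fun i => Real.rpow_pos_of_pos (hw i) _
  have hu'pos : ∀ i, 0 < u' i := fun i => Real.rpow_pos_of_pos (hw' i) _
  have hMpd : M.PosDef := posdef_M A hA u hupos
  have hM'pd : M'.PosDef := by
    refine Matrix.PosDef.of_dotProduct_mulVec_pos ?_ ?_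
    · show M'ᴴ = M'
      rw [Matrix.conjTranspose_eq_transpose_of_trivial]
      exact hM'_def ▸ symmform A' u'
    intro x hx
    simp only [star_trivial]
    rw [hM'_def, quadform]
    have hAx : A *ᵥ x ≠ 0 := fun h => hx (mulVec_inj A hA x h)
    obtain ⟨i, hi⟩ := Function.ne_iff.mp hAx
    have hval : (A' *ᵥ x) (f i) = (A *ᵥ x) i := by
      show A' (f i) ⬝ᵥ x = A i ⬝ᵥ x
      rw [hrows i]
    refine Finset.sum_pos' (fun j _ => mul_nonneg (hu'pos j).le (sq_nonneg _))
      ⟨f i, Finset.mem_univ _, mul_pos (hu'pos (f i)) ?_⟩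
    rw [hval]
    exact sq_pos_of_ne_zero hi
  -- basic facts about M and M'
  have hMsym : Mᵀ = M := symmform A u
  have hM'sym : M'ᵀ = M' := symmform A' u'
  have hMinv : M * M⁻¹ = 1 := Matrix.mul_nonsing_inv M hMpd.det_pos.ne'.isUnit
  have hM'inv : M' * M'⁻¹ = 1 := Matrix.mul_nonsing_inv M' hM'pd.det_pos.ne'.isUnit
  have hMinvmul : M⁻¹ * M = 1 := Matrix.nonsing_inv_mul M hMpd.det_pos.ne'.isUnit
  have hMpsd : ∀ z, 0 ≤ z ⬝ᵥ M *ᵥ z := fun z => by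
    simpa using hMpd.posSemidef.dotProduct_mulVec_nonneg z
  have hM'psd : ∀ z, 0 ≤ z ⬝ᵥ M' *ᵥ z := fun z => by
    simpa using hM'pd.posSemidef.dotProduct_mulVec_nonneg z
  have hMinvpsd : ∀ z, 0 ≤ z ⬝ᵥ M⁻¹ *ᵥ z := fun z => by
    simpa using hMpd.inv.posSemidef.dotProduct_mulVec_nonneg z
  have hM'invpsd : ∀ z, 0 ≤ z ⬝ᵥ M'⁻¹ *ᵥ z := fun z => by
    simpa using hM'pd.inv.posSemidef.dotProduct_mulVec_nonneg z
  have hhalf : (p/2) * (2/p) = 1 := by field_simp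
  -- quadratic forms of inverses
  have hqM : ∀ i, A i ⬝ᵥ M⁻¹ *ᵥ A i = w i ^ (2/p) := by
    intro i
    have h1 : ((A i ⬝ᵥ M⁻¹ *ᵥ A i) ^ (p/2)) ^ (2/p) = A i ⬝ᵥ M⁻¹ *ᵥ A i := by
      rw [← Real.rpow_mul (hMinvpsd (A i)), hhalf, Real.rpow_one]
    rw [hlewis i] at h1
    exact h1.symm
  have hqM' : ∀ i : Fin n, A i ⬝ᵥ M'⁻¹ *ᵥ A i = w' (f i) ^ (2/p) := by
    intro i
    have h1 : ((A i ⬝ᵥ M'⁻¹ *ᵥ A i) ^ (p/2)) ^ (2/p) = A i ⬝ᵥ M'⁻¹ *ᵥ A i := by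
      rw [← Real.rpow_mul (hM'invpsd (A i)), hhalf, Real.rpow_one]
    have h2 := hlewis' (f i)
    rw [hrows i] at h2
    rw [h2] at h1
    exact h1.symm
  -- sum of weights equals d
  have hsumw : ∑ i, w i = (d:ℝ) := by
    have h1 : ∀ i, u i * (A i ⬝ᵥ M⁻¹ *ᵥ A i) = w i := by
      intro i
      rw [hqM i]
      show w i ^ (1 - 2/p) * w i ^ (2/p) = w i
      rw [← Real.rpow_add (hw i)]
      norm_num
    calc ∑ i, w i = ∑ i, u i * (A i ⬝ᵥ M⁻¹ *ᵥ A i) := by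
          exact (Finset.sum_congr rfl fun i _ => h1 i).symm
      _ = Matrix.trace (M⁻¹ * M) := trace_aux A u M⁻¹
      _ = (d:ℝ) := by rw [hMinvmul]; simp [Matrix.trace_one]
  have hdpos : (0:ℝ) < d := by
    rw [← hsumw]
    exact Finset.sum_pos (fun i _ => hw i) ⟨⟨0, hn⟩, Finset.mem_univ _⟩
  -- the key inequality
  have key : ∀ x : Fin d → ℝ, x ⬝ᵥ M *ᵥ x ≤ (d:ℝ) ^ (1 - 2/p) * (x ⬝ᵥ M' *ᵥ x) := by
    intro x
    by_cases hx : x = 0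
    · subst hx
      simp [Matrix.mulVec_zero]
    have hQ' : 0 < x ⬝ᵥ M' *ᵥ x := by simpa using hM'pd.dotProduct_mulVec_pos hx
    set Q' : ℝ := x ⬝ᵥ M' *ᵥ x with hQ'_def
    -- row-wise Cauchy-Schwarz consequence
    have hrow : ∀ i : Fin n, (((A *ᵥ x) i)^2) ^ (p/2)
        ≤ u' (f i) * Q' ^ (p/2 - 1) * ((A *ᵥ x) i)^2 := by
      intro i
      have hcs : ((A *ᵥ x) i)^2 ≤ (w' (f i) ^ (2/p)) * Q' := by
        have := cauchyM M' hM'sym hM'psd hM'inv (A i) x hQ'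
        rw [hqM' i] at this
        exact this
      have hX0 : (0:ℝ) ≤ ((A *ᵥ x) i)^2 := sq_nonneg _
      have h2 : (((A *ᵥ x) i)^2) ^ (p/2-1) ≤ ((w' (f i) ^ (2/p)) * Q') ^ (p/2-1) :=
        Real.rpow_le_rpow hX0 hcs (by linarith)
      have h3 : ((w' (f i) ^ (2/p)) * Q') ^ (p/2-1)
          = u' (f i) * Q' ^ (p/2-1) := by
        rw [Real.mul_rpow (Real.rpow_nonneg (hw' (f i)).le _) hQ'.le,
          ← Real.rpow_mul (hw' (f i)).le]
        congr 2
        field_simp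
      have h4 : (((A *ᵥ x) i)^2) ^ (p/2) = (((A *ᵥ x) i)^2) ^ (p/2-1) * ((A *ᵥ x) i)^2 := by
        rw [show p/2 = (p/2-1) + 1 by ring, Real.rpow_add' hX0 (by intro h; rw [show p/2-1+1 = p/2 by ring] at h; nlinarith),
          Real.rpow_one]
        norm_num
      rw [h4]
      calc (((A *ᵥ x) i)^2) ^ (p/2-1) * ((A *ᵥ x) i)^2
          ≤ ((w' (f i) ^ (2/p)) * Q') ^ (p/2-1) * ((A *ᵥ x) i)^2 :=
            mul_le_mul_of_nonneg_right h2 hX0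
        _ = u' (f i) * Q' ^ (p/2-1) * ((A *ᵥ x) i)^2 := by rw [h3]
    -- sum of p-th powers bounded by Q'^{p/2}
    have hsump : ∑ i : Fin n, (((A *ᵥ x) i)^2) ^ (p/2) ≤ Q' ^ (p/2) := by
      have h5 : ∑ i : Fin n, u' (f i) * ((A *ᵥ x) i)^2 ≤ Q' := by
        have e : ∑ i : Fin n, u' (f i) * ((A *ᵥ x) i)^2
            = ∑ j ∈ Finset.univ.map f, u' j * ((A' *ᵥ x) j)^2 := by
          rw [Finset.sum_map]
          refine Finset.sum_congr rfl fun i _ => ?_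
          have hval : (A' *ᵥ x) (f i) = (A *ᵥ x) i := by
            show A' (f i) ⬝ᵥ x = A i ⬝ᵥ x
            rw [hrows i]
          rw [hval]
        rw [e, hQ'_def, hM'_def, quadform]
        refine Finset.sum_le_sum_of_subset_of_nonneg (Finset.subset_univ _)
          (fun j _ _ => mul_nonneg (hu'pos j).le (sq_nonneg _))
      calc ∑ i : Fin n, (((A *ᵥ x) i)^2) ^ (p/2)
          ≤ ∑ i : Fin n, u' (f i) * Q' ^ (p/2-1) * ((A *ᵥ x) i)^2 :=
            Finset.sum_le_sum fun i _ => hrow i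
        _ = Q' ^ (p/2-1) * ∑ i : Fin n, u' (f i) * ((A *ᵥ x) i)^2 := by
            rw [Finset.mul_sum]
            exact Finset.sum_congr rfl fun i _ => by ring
        _ ≤ Q' ^ (p/2-1) * Q' :=
            mul_le_mul_of_nonneg_left h5 (Real.rpow_nonneg hQ'.le _)
        _ = Q' ^ (p/2) := by
            rw [show p/2 = (p/2-1) + 1 by ring, Real.rpow_add' hQ'.le
              (by intro h; rw [show p/2-1+1 = p/2 by ring] at h; nlinarith), Real.rpow_one]
            norm_num
    -- Hölder
    have hpq : Real.HolderConjugate (p/(p-2)) (p/2) := by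
      rw [Real.holderConjugate_iff]
      constructor
      · rw [lt_div_iff₀ (by linarith)]
        linarith
      · rw [inv_div, inv_div]
        field_simp
        ring
    have hold := Real.inner_le_Lp_mul_Lq_of_nonneg Finset.univ hpq
      (f := fun i => u i) (g := fun i => ((A *ᵥ x) i)^2)
      (fun i _ => (hupos i).le) (fun i _ => sq_nonneg _)
    have e1 : ∑ i, u i * ((A *ᵥ x) i)^2 = x ⬝ᵥ M *ᵥ x := (quadform A u x).symm
    have e2 : ∑ i : Fin n, (u i) ^ (p/(p-2)) = (d:ℝ) := by
      rw [← hsumw]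
      refine Finset.sum_congr rfl fun i _ => ?_
      show (w i ^ (1-2/p)) ^ (p/(p-2)) = w i
      rw [← Real.rpow_mul (hw i).le]
      have hexp : (1-2/p)*(p/(p-2)) = 1 := by
        have h2 : p - 2 ≠ 0 := by linarith
        field_simp
      rw [hexp, Real.rpow_one]
    have e3 : ((∑ i : Fin n, (((A *ᵥ x) i)^2) ^ (p/2)) : ℝ) ^ (1/(p/2)) ≤ Q' := by
      have hmono : ((∑ i : Fin n, (((A *ᵥ x) i)^2) ^ (p/2)) : ℝ) ^ (1/(p/2))
          ≤ (Q' ^ (p/2)) ^ (1/(p/2)) :=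
        Real.rpow_le_rpow (Finset.sum_nonneg fun i _ => Real.rpow_nonneg (sq_nonneg _) _)
          hsump (by positivity)
      rwa [← Real.rpow_mul hQ'.le, mul_one_div, div_self (by positivity : p/2 ≠ 0),
        Real.rpow_one] at hmono
    rw [e1, e2] at hold
    have hd1 : ((d:ℝ)) ^ (1/(p/(p-2))) = (d:ℝ) ^ (1-2/p) := by
      congr 1
      rw [one_div, inv_div]
      field_simp
    rw [hd1] at hold
    calc x ⬝ᵥ M *ᵥ x ≤ (d:ℝ) ^ (1-2/p) * ((∑ i : Fin n, (((A *ᵥ x) i)^2) ^ (p/2)) : ℝ) ^ (1/(p/2)) := hold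
      _ ≤ (d:ℝ) ^ (1-2/p) * Q' := by
          exact mul_le_mul_of_nonneg_left e3 (Real.rpow_nonneg hdpos.le _)
  -- conclusions
  have hcpos : (0:ℝ) < (d:ℝ) ^ (2/p - 1) := Real.rpow_pos_of_pos hdpos _
  have hcancel : (d:ℝ) ^ (2/p - 1) * (d:ℝ) ^ (1 - 2/p) = 1 := by
    rw [← Real.rpow_add hdpos]
    norm_num
  constructor
  · refine Matrix.PosSemidef.of_dotProduct_mulVec_nonneg ?_ ?_
    · show (M' - (d:ℝ) ^ (2/p-1) • M)ᴴ = _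
      rw [Matrix.conjTranspose_eq_transpose_of_trivial, Matrix.transpose_sub,
        Matrix.transpose_smul, hMsym, hM'sym]
    · intro x
      simp only [star_trivial]
      rw [Matrix.sub_mulVec, dotProduct_sub, Matrix.smul_mulVec,
        dotProduct_smul, smul_eq_mul]
      have hk := key x
      have := mul_le_mul_of_nonneg_left hk hcpos.le
      rw [← mul_assoc, hcancel, one_mul] at this
      linarith
  · intro i
    set a : Fin d → ℝ := A i with ha_def
    set x : Fin d → ℝ := M'⁻¹ *ᵥ a with hx_def
    set c' : ℝ := (d:ℝ) ^ (1 - 2/p) with hc'_def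
    have hc'pos : 0 < c' := Real.rpow_pos_of_pos hdpos _
    have ht'eq : a ⬝ᵥ x = w' (f i) ^ (2/p) := hqM' i
    have ht'0 : 0 ≤ a ⬝ᵥ x := ht'eq ▸ Real.rpow_nonneg (hw' (f i)).le _
    have hM'a : M' *ᵥ x = a := by
      rw [hx_def, Matrix.mulVec_mulVec, hM'inv, Matrix.one_mulVec]
    have hxM'x : x ⬝ᵥ M' *ᵥ x = a ⬝ᵥ x := by
      rw [hM'a]
      exact dotProduct_comm x a
    have h2 : x ⬝ᵥ M *ᵥ x ≤ c' * (a ⬝ᵥ x) := by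
      have := key x
      rwa [hxM'x] at this
    have h1 := quad_ineq M hMsym hMpsd hMinv a x (1/c')
    rw [hqM i] at h1
    have h3 : (1/c')^2 * (x ⬝ᵥ M *ᵥ x) ≤ (1/c')^2 * (c' * (a ⬝ᵥ x)) :=
      mul_le_mul_of_nonneg_left h2 (by positivity)
    have h4 : 2*(1/c')*(a ⬝ᵥ x) - (1/c')^2*(c' * (a ⬝ᵥ x)) = (a ⬝ᵥ x)/c' := by
      field_simp
      ring
    have h5 : (a ⬝ᵥ x)/c' ≤ w i ^ (2/p) := by linarith
    have h6 : a ⬝ᵥ x ≤ c' * (w i ^ (2/p)) := by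
      rw [div_le_iff₀ hc'pos] at h5
      linarith [h5]
    -- now raise to the power p/2
    have h7 := hlewis' (f i)
    rw [hrows i, ← ha_def] at h7
    have h8 : (a ⬝ᵥ M'⁻¹ *ᵥ a) = a ⬝ᵥ x := rfl
    rw [h8] at h7
    have h9 : (a ⬝ᵥ x) ^ (p/2) ≤ (c' * (w i ^ (2/p))) ^ (p/2) :=
      Real.rpow_le_rpow ht'0 h6 (by linarith)
    rw [h7] at h9
    calc w' (f i) ≤ (c' * (w i ^ (2/p))) ^ (p/2) := h9
      _ = (d:ℝ) ^ (p/2 - 1) * w i := by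
          rw [Real.mul_rpow hc'pos.le (Real.rpow_nonneg (hw i).le _),
            hc'_def, ← Real.rpow_mul (Nat.cast_nonneg d), ← Real.rpow_mul (hw i).le,
            show (2/p)*(p/2) = 1 by field_simp, Real.rpow_one,
            show (1-2/p)*(p/2) = p/2 - 1 by field_simp]
end

section
/- Let A have ℓ_1 Lewis weights each bounded by U, and let σ_i be independent Rademacher variables. Then for any l ≥ 1, E_σ[(max_{‖Ax‖₁=1} |Σ_i σ_i |a_iᵀx||)^l] ≤ 2n(C·l·U)^{l/2} for an absolute constant C. -/
open Matrix Finset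

noncomputable def sgn (b : Bool) : ℝ := if b then 1 else -1

lemma sgn_sq (b : Bool) : sgn b ^ 2 = 1 := by cases b <;> simp [sgn]

lemma sgn_abs (b : Bool) : |sgn b| = 1 := by cases b <;> simp [sgn]

/-- odd double factorial -/
def Dodd : ℕ → ℕ
  | 0 => 1
  | (k+1) => (2*k+1) * Dodd k

lemma Dodd_pos (k : ℕ) : 0 < Dodd k := by
  induction k with
  | zero => simp [Dodd]
  | succ k ih => exact Nat.mul_pos (by omega) ih

lemma Dodd_fac (k : ℕ) : 2^k * k.factorial * Dodd k = (2*k).factorial := by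
  induction k with
  | zero => simp [Dodd]
  | succ k ih =>
    have h2 : (2*(k+1)).factorial = (2*k+2) * ((2*k+1) * (2*k).factorial) := by
      have : 2*(k+1) = (2*k+1)+1 := by ring
      rw [this, Nat.factorial_succ, Nat.factorial_succ]
    rw [h2, ← ih]
    show 2^(k+1) * ((k+1) * k.factorial) * ((2*k+1) * Dodd k) = _
    rw [pow_succ]
    ring

lemma two_pow_fac_le (m : ℕ) : 2^m * m.factorial ≤ (2*m).factorial := by
  induction m with
  | zero => simp
  | succ m ih =>
    have h2 : (2*(m+1)).factorial = (2*m+2) * ((2*m+1) * (2*m).factorial) := by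
      have : 2*(m+1) = (2*m+1)+1 := by ring
      rw [this, Nat.factorial_succ, Nat.factorial_succ]
    calc 2^(m+1) * (m+1).factorial = (2*(m+1)) * (2^m * m.factorial) := by
          rw [Nat.factorial_succ]; ring
      _ ≤ (2*(m+1)) * (2*m).factorial := by
          exact Nat.mul_le_mul_left _ ih
      _ ≤ (2*m+2) * ((2*m+1) * (2*m).factorial) := by
          have : (2*m).factorial ≤ (2*m+1) * (2*m).factorial := Nat.le_mul_of_pos_left _ (by omega)
          calc (2*(m+1)) * (2*m).factorial = (2*m+2) * (2*m).factorial := by ring_nf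
            _ ≤ (2*m+2) * ((2*m+1)*(2*m).factorial) := Nat.mul_le_mul_left _ this
      _ = (2*(m+1)).factorial := h2.symm

lemma key_choose {k m : ℕ} (hm : m ≤ k) :
    (2*k).choose (2*m) * Dodd m ≤ k.choose m * Dodd k := by
  have t : 0 < 2^k * m.factorial * (k-m).factorial := by positivity
  apply Nat.le_of_mul_le_mul_right _ t
  have e1 : k.choose m * Dodd k * (2^k * m.factorial * (k-m).factorial)
      = (2*k).factorial := by
    calc k.choose m * Dodd k * (2^k * m.factorial * (k-m).factorial)
        = (k.choose m * m.factorial * (k-m).factorial) * (2^k * Dodd k) := by ring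
      _ = k.factorial * 2^k * Dodd k := by
          rw [Nat.choose_mul_factorial_mul_factorial hm]; ring
      _ = (2*k).factorial := by rw [← Dodd_fac k]; ring
  rw [e1]
  have e2 : (2*k).choose (2*m) * Dodd m * (2^k * m.factorial * (k-m).factorial)
      = (2*k).choose (2*m) * (2^m * m.factorial * Dodd m) * (2^(k-m) * (k-m).factorial) := by
    have h2 : 2^k = 2^m * 2^(k-m) := by rw [← pow_add]; congr 1; omega
    rw [h2]; ring
  rw [e2, Dodd_fac m]
  calc (2*k).choose (2*m) * (2*m).factorial * (2^(k-m) * (k-m).factorial)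
      ≤ (2*k).choose (2*m) * (2*m).factorial * (2*(k-m)).factorial := by
        exact Nat.mul_le_mul_left _ (two_pow_fac_le _)
    _ = (2*k).factorial := by
        have h3 : 2*(k-m) = 2*k - 2*m := by omega
        rw [h3, Nat.choose_mul_factorial_mul_factorial (by omega : 2*m ≤ 2*k)]

section EvenMoment

variable {ι : Type*} [Fintype ι] [DecidableEq ι]

lemma sum_bool_split (a : ι) (g : (ι → Bool) → ℝ) :
    ∑ σ : ι → Bool, g σ =
      ∑ ρ : ({j // j ≠ a} → Bool),
        (g ((Equiv.funSplitAt a Bool).symm (true, ρ)) +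
         g ((Equiv.funSplitAt a Bool).symm (false, ρ))) := by
  rw [← Equiv.sum_comp (Equiv.funSplitAt a Bool).symm g, Fintype.sum_prod_type,
    Fintype.sum_bool, ← Finset.sum_add_distrib]

lemma funSplitAt_symm_ne (a : ι) (b : Bool) (ρ : {j // j ≠ a} → Bool) {j : ι} (h : j ≠ a) :
    (Equiv.funSplitAt a Bool).symm (b, ρ) j = ρ ⟨j, h⟩ := by
  simp [Equiv.funSplitAt, Equiv.piSplitAt, h]

lemma funSplitAt_symm_self (a : ι) (b : Bool) (ρ : {j // j ≠ a} → Bool) :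
    (Equiv.funSplitAt a Bool).symm (b, ρ) a = b := by
  simp [Equiv.funSplitAt, Equiv.piSplitAt]

lemma indep_sum {s : Finset ι} {a : ι} (ha : a ∉ s) (b : ι → ℝ) (j m : ℕ) :
    ∑ σ : ι → Bool, (∑ i ∈ s, sgn (σ i) * b i)^j * sgn (σ a)^m
      = (if Even m then (1:ℝ) else 0) * ∑ σ : ι → Bool, (∑ i ∈ s, sgn (σ i) * b i)^j := by
  have hX : ∀ (c : Bool) (ρ : {j // j ≠ a} → Bool),
      (∑ i ∈ s, sgn ((Equiv.funSplitAt a Bool).symm (c, ρ) i) * b i)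
      = (∑ i ∈ s, sgn ((Equiv.funSplitAt a Bool).symm (true, ρ) i) * b i) := by
    intro c ρ
    apply Finset.sum_congr rfl
    intro i hi
    have hne : i ≠ a := fun h => ha (h ▸ hi)
    rw [funSplitAt_symm_ne a c ρ hne, funSplitAt_symm_ne a true ρ hne]
  rw [sum_bool_split a, sum_bool_split a (fun σ => (∑ i ∈ s, sgn (σ i) * b i) ^ j)]
  simp only [hX, funSplitAt_symm_self]
  rcases Nat.even_or_odd m with he | ho
  · rw [if_pos he]
    have h1 : sgn true ^ m = 1 := by simp [sgn]
    have h2 : sgn false ^ m = 1 := by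
      simp only [sgn, if_neg Bool.false_ne_true]
      exact he.neg_one_pow
    rw [h1, h2, Finset.mul_sum]
    apply Finset.sum_congr rfl
    intro ρ _
    ring
  · rw [if_neg (Nat.not_even_iff_odd.2 ho)]
    have h1 : sgn true ^ m = 1 := by simp [sgn]
    have h2 : sgn false ^ m = -1 := by
      simp only [sgn, if_neg Bool.false_ne_true]
      exact ho.neg_one_pow
    rw [h1, h2, zero_mul]
    apply Finset.sum_eq_zero
    intro ρ _
    ring

lemma even_moment (b : ι → ℝ) (s : Finset ι) (k : ℕ) :
    ∑ σ : ι → Bool, (∑ i ∈ s, sgn (σ i) * b i)^(2*k)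
      ≤ 2^(Fintype.card ι) * ((Dodd k : ℝ) * (∑ i ∈ s, b i^2)^k) := by
  induction s using Finset.cons_induction generalizing k with
  | empty =>
    cases k with
    | zero => simp [Fintype.card_fun, Dodd]
    | succ k =>
      simp only [Finset.sum_empty]
      rw [zero_pow (by omega), zero_pow (by omega)]
      simp
  | cons a s' ha ih =>
    have expand : ∀ σ : ι → Bool,
        (∑ i ∈ Finset.cons a s' ha, sgn (σ i) * b i)^(2*k)
        = ∑ j ∈ Finset.range (2*k+1),
            (∑ i ∈ s', sgn (σ i) * b i)^j * sgn (σ a)^(2*k-j) * ((b a)^(2*k-j) * ((2*k).choose j : ℝ)) := by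
      intro σ
      rw [Finset.sum_cons, add_comm, add_pow]
      apply Finset.sum_congr rfl
      intro j _
      rw [mul_pow]
      ring
    simp only [expand]
    rw [Finset.sum_comm]
    have swap : ∀ j, ∑ σ : ι → Bool,
        (∑ i ∈ s', sgn (σ i) * b i)^j * sgn (σ a)^(2*k-j) * ((b a)^(2*k-j) * ((2*k).choose j : ℝ))
        = ((if Even (2*k-j) then (1:ℝ) else 0) * ∑ σ : ι → Bool, (∑ i ∈ s', sgn (σ i) * b i)^j)
            * ((b a)^(2*k-j) * ((2*k).choose j : ℝ)) := by
      intro j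
      rw [← Finset.sum_mul, indep_sum ha]
    simp only [swap]
    -- restrict to even j = 2m
    have himg : (Finset.range (k+1)).image (fun m => 2*m) ⊆ Finset.range (2*k+1) := by
      intro j hj
      simp only [Finset.mem_image, Finset.mem_range] at hj ⊢
      obtain ⟨m, hm, rfl⟩ := hj
      omega
    rw [← Finset.sum_subset himg]
    · rw [Finset.sum_image (by intro x _ y _ h; simp only at h; omega)]
      have step : ∀ m ∈ Finset.range (k+1),
          ((if Even (2*k-2*m) then (1:ℝ) else 0) * ∑ σ : ι → Bool, (∑ i ∈ s', sgn (σ i) * b i)^(2*m))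
            * ((b a)^(2*k-2*m) * ((2*k).choose (2*m) : ℝ))
          ≤ 2^(Fintype.card ι) * (((2*k).choose (2*m) * Dodd m : ℕ) * ((b a)^2)^(k-m) * (∑ i ∈ s', b i^2)^m) := by
        intro m hm
        simp only [Finset.mem_range] at hm
        have hev : Even (2*k-2*m) := ⟨k-m, by omega⟩
        rw [if_pos hev, one_mul]
        have hba : (b a)^(2*k-2*m) = ((b a)^2)^(k-m) := by
          rw [← pow_mul]
          congr 1
          omega
        rw [hba]
        have hnn : (0:ℝ) ≤ ((b a)^2)^(k-m) * ((2*k).choose (2*m) : ℝ) := by positivity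
        calc (∑ σ : ι → Bool, (∑ i ∈ s', sgn (σ i) * b i)^(2*m)) * (((b a)^2)^(k-m) * ((2*k).choose (2*m) : ℝ))
            ≤ (2^(Fintype.card ι) * ((Dodd m : ℝ) * (∑ i ∈ s', b i^2)^m)) * (((b a)^2)^(k-m) * ((2*k).choose (2*m) : ℝ)) := by
              apply mul_le_mul_of_nonneg_right (ih m) hnn
          _ = 2^(Fintype.card ι) * (((2*k).choose (2*m) * Dodd m : ℕ) * ((b a)^2)^(k-m) * (∑ i ∈ s', b i^2)^m) := by
              push_cast
              ring
      calc ∑ m ∈ Finset.range (k+1), ((if Even (2*k-2*m) then (1:ℝ) else 0) * ∑ σ : ι → Bool, (∑ i ∈ s', sgn (σ i) * b i)^(2*m))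
            * ((b a)^(2*k-2*m) * ((2*k).choose (2*m) : ℝ))
          ≤ ∑ m ∈ Finset.range (k+1), 2^(Fintype.card ι) * (((2*k).choose (2*m) * Dodd m : ℕ) * ((b a)^2)^(k-m) * (∑ i ∈ s', b i^2)^m) :=
            Finset.sum_le_sum step
        _ ≤ ∑ m ∈ Finset.range (k+1), 2^(Fintype.card ι) * ((k.choose m * Dodd k : ℕ) * ((b a)^2)^(k-m) * (∑ i ∈ s', b i^2)^m) := by
            apply Finset.sum_le_sum
            intro m hm
            simp only [Finset.mem_range] at hm
            apply mul_le_mul_of_nonneg_left _ (by positivity)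
            apply mul_le_mul_of_nonneg_right
            apply mul_le_mul_of_nonneg_right
            · exact_mod_cast Nat.cast_le.mpr (key_choose (by omega))
            · positivity
            · positivity
        _ = 2^(Fintype.card ι) * ((Dodd k : ℝ) * (∑ i ∈ Finset.cons a s' ha, b i^2)^k) := by
            rw [Finset.sum_cons, ← Finset.mul_sum]
            congr 1
            rw [add_comm ((b a)^2), add_pow]
            rw [Finset.mul_sum]
            apply Finset.sum_congr rfl
            intro m hm
            push_cast
            ring
    · intro j hj hnotin
      simp only [Finset.mem_range] at hj
      have hodd : ¬ Even (2*k-j) := by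
        intro hev
        apply hnotin
        simp only [Finset.mem_image, Finset.mem_range]
        obtain ⟨t, ht⟩ := hev
        exact ⟨k - t, by omega, by omega⟩
      rw [if_neg hodd, zero_mul, zero_mul]

end EvenMoment

lemma Dodd_le (k : ℕ) : Dodd k ≤ (2*k)^k := by
  induction k with
  | zero => simp [Dodd]
  | succ k ih =>
    calc Dodd (k+1) = (2*k+1) * Dodd k := rfl
      _ ≤ (2*(k+1)) * (2*k)^k := Nat.mul_le_mul (by omega) ih
      _ ≤ (2*(k+1)) * (2*(k+1))^k := by
          apply Nat.mul_le_mul_left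
          exact Nat.pow_le_pow_left (by omega) k
      _ = (2*(k+1))^(k+1) := (pow_succ' _ _).symm

lemma khintchine {ι : Type*} [Fintype ι] [DecidableEq ι] (b : ι → ℝ) {l : ℝ} (hl : 1 ≤ l) :
    ∑ σ : ι → Bool, |∑ i, sgn (σ i) * b i| ^ l
      ≤ 2^(Fintype.card ι) * (3 * l * ∑ i, b i^2) ^ (l/2) := by
  set N : ℝ := 2^(Fintype.card ι) with hNdef
  have hN : (0:ℝ) < N := by positivity
  have hl0 : (0:ℝ) < l := lt_of_lt_of_le one_pos hl
  set k : ℕ := ⌈l/2⌉₊ with hkdef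
  have hk1 : 1 ≤ k := Nat.one_le_iff_ne_zero.2 (by
    simp only [hkdef, ne_eq, Nat.ceil_eq_zero, not_le]
    positivity)
  have hkR : (0:ℝ) < (k:ℝ) := by exact_mod_cast hk1
  have hk2 : l ≤ 2*(k:ℝ) := by
    have := Nat.le_ceil (l/2)
    linarith
  have hk3 : 2*(k:ℝ) ≤ 3*l := by
    have h := Nat.ceil_lt_add_one (by positivity : (0:ℝ) ≤ l/2)
    have : (k:ℝ) < l/2 + 1 := h
    linarith
  set S : ℝ := ∑ i, b i^2 with hSdef
  have hS : 0 ≤ S := Finset.sum_nonneg (fun i _ => sq_nonneg _)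
  set X : (ι → Bool) → ℝ := fun σ => ∑ i, sgn (σ i) * b i with hXdef
  set p : ℝ := 2*(k:ℝ)/l with hpdef
  have hp : 1 ≤ p := (one_le_div hl0).2 hk2
  have hcard : (Finset.univ : Finset (ι → Bool)).card = 2^(Fintype.card ι) := by
    rw [Finset.card_univ, Fintype.card_fun, Fintype.card_bool]
  have hw' : ∑ _σ : ι → Bool, (1/N) = 1 := by
    rw [Finset.sum_const, hcard, nsmul_eq_mul]
    push_cast [hNdef]
    field_simp
  have hzp : ∀ σ : ι → Bool, (|X σ| ^ l) ^ p = X σ ^ (2*k) := by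
    intro σ
    rw [← Real.rpow_mul (abs_nonneg _)]
    have hlp : l * p = ((2*k : ℕ) : ℝ) := by
      rw [hpdef]
      push_cast
      field_simp
    rw [hlp, Real.rpow_natCast, pow_mul, pow_mul, sq_abs]
  have jensen := Real.arith_mean_le_rpow_mean Finset.univ (fun _ => 1/N) (fun σ => |X σ| ^ l)
    (fun i _ => by positivity) hw' (fun i _ => by positivity) hp
  have hmom : ∑ σ : ι → Bool, (1/N) * (|X σ| ^ l) ^ p ≤ ((2*(k:ℝ))*S)^(k:ℕ) := by
    simp only [hzp]
    rw [← Finset.mul_sum]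
    have h1 : ∑ σ : ι → Bool, X σ ^ (2*k) ≤ N * ((Dodd k : ℝ) * S^k) := even_moment b Finset.univ k
    have h2 : (1/N) * ∑ σ : ι → Bool, X σ ^ (2*k) ≤ (Dodd k : ℝ) * S^k := by
      rw [one_div, inv_mul_le_iff₀ hN]
      linarith [h1]
    refine h2.trans ?_
    have h3 : (Dodd k : ℝ) ≤ (2*(k:ℝ))^(k:ℕ) := by
      have := Dodd_le k
      calc (Dodd k : ℝ) ≤ ((2*k)^k : ℕ) := by exact_mod_cast this
        _ = (2*(k:ℝ))^(k:ℕ) := by push_cast; ring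
    calc (Dodd k : ℝ) * S^k ≤ (2*(k:ℝ))^(k:ℕ) * S^k := by
          apply mul_le_mul_of_nonneg_right h3 (by positivity)
      _ = ((2*(k:ℝ))*S)^(k:ℕ) := (mul_pow _ _ _).symm
  have hsum_nonneg : (0:ℝ) ≤ ∑ σ : ι → Bool, (1/N) * (|X σ| ^ l) ^ p :=
    Finset.sum_nonneg (fun σ _ => by positivity)
  have main : ∑ σ : ι → Bool, (1/N) * |X σ| ^ l ≤ (3 * l * S) ^ (l/2) := by
    refine jensen.trans ?_
    have h4 : (∑ σ : ι → Bool, (1/N) * (|X σ| ^ l) ^ p) ^ (1/p) ≤ (((2*(k:ℝ))*S)^(k:ℕ)) ^ (1/p) :=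
      Real.rpow_le_rpow hsum_nonneg hmom (by positivity)
    refine h4.trans ?_
    have h5 : (((2*(k:ℝ))*S)^(k:ℕ)) ^ (1/p) = ((2*(k:ℝ))*S) ^ ((k:ℝ) * (1/p)) := by
      rw [← Real.rpow_natCast ((2*(k:ℝ))*S) k, ← Real.rpow_mul (by positivity)]
    rw [h5]
    have h6 : (k:ℝ) * (1/p) = l/2 := by
      rw [hpdef]
      field_simp
    rw [h6]
    apply Real.rpow_le_rpow (by positivity) _ (by positivity)
    apply mul_le_mul_of_nonneg_right hk3 hS
  have hfin : (1/N) * ∑ σ : ι → Bool, |X σ| ^ l ≤ (3 * l * S) ^ (l/2) := by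
    rw [Finset.mul_sum]
    exact main
  calc ∑ σ : ι → Bool, |X σ| ^ l = N * ((1/N) * ∑ σ : ι → Bool, |X σ| ^ l) := by
        field_simp
    _ ≤ N * (3 * l * S) ^ (l/2) := mul_le_mul_of_nonneg_left hfin hN.le


section LA

variable {n d : ℕ} (A : Matrix (Fin n) (Fin d) ℝ) (w : Fin n → ℝ)

lemma diag_inv (hw : ∀ i, 0 < w i) :
    (Matrix.diagonal w)⁻¹ = Matrix.diagonal (fun i => (w i)⁻¹) := by
  apply Matrix.inv_eq_right_inv
  rw [Matrix.diagonal_mul_diagonal]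
  have h1 : (fun i => w i * (w i)⁻¹) = fun _ => (1:ℝ) := funext fun i => mul_inv_cancel₀ (hw i).ne'
  rw [h1]
  exact Matrix.diagonal_one

lemma Mmat_mulVec (hw : ∀ i, 0 < w i) (x : Fin d → ℝ) :
    (Aᵀ * (Matrix.diagonal w)⁻¹ * A).mulVec x
      = Aᵀ.mulVec (fun i => (w i)⁻¹ * A.mulVec x i) := by
  rw [diag_inv w hw]
  rw [← Matrix.mulVec_mulVec, ← Matrix.mulVec_mulVec]
  have h2 : (Matrix.diagonal fun i => (w i)⁻¹) *ᵥ (A *ᵥ x) = fun i => (w i)⁻¹ * A.mulVec x i := by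
    funext i
    exact Matrix.mulVec_diagonal _ _ i
  rw [h2]

lemma quad_form (hw : ∀ i, 0 < w i) (x : Fin d → ℝ) :
    x ⬝ᵥ (Aᵀ * (Matrix.diagonal w)⁻¹ * A).mulVec x
      = ∑ i, (w i)⁻¹ * (A.mulVec x i)^2 := by
  rw [Mmat_mulVec A w hw, Matrix.dotProduct_mulVec, Matrix.vecMul_transpose]
  simp only [dotProduct]
  apply Finset.sum_congr rfl
  intro i _
  ring

lemma A_inj (hrank : A.rank = d) (x : Fin d → ℝ) (hx : A.mulVec x = 0) : x = 0 := by
  have h := LinearMap.finrank_range_add_finrank_ker A.mulVecLin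
  rw [show Module.finrank ℝ ↥(LinearMap.range A.mulVecLin) = A.rank from rfl, hrank] at h
  have hd : Module.finrank ℝ (Fin d → ℝ) = d := Module.finrank_fin_fun ℝ
  rw [hd] at h
  have hker : Module.finrank ℝ ↥(LinearMap.ker A.mulVecLin) = 0 := by omega
  have hbot : LinearMap.ker A.mulVecLin = ⊥ := Submodule.finrank_eq_zero.mp hker
  have hmem : x ∈ LinearMap.ker A.mulVecLin := by
    rw [LinearMap.mem_ker, Matrix.mulVecLin_apply]
    exact hx
  rw [hbot] at hmem
  simpa using hmem

lemma M_det (hw : ∀ i, 0 < w i) (hrank : A.rank = d) :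
    IsUnit (Aᵀ * (Matrix.diagonal w)⁻¹ * A).det := by
  rw [← Matrix.isUnit_iff_isUnit_det]
  rw [← Matrix.mulVec_injective_iff_isUnit]
  set M := Aᵀ * (Matrix.diagonal w)⁻¹ * A with hM
  have hzero : ∀ z, M.mulVec z = 0 → z = 0 := by
    intro z hz
    have hq : z ⬝ᵥ M.mulVec z = 0 := by rw [hz]; simp
    rw [quad_form A w hw] at hq
    have hterm : ∀ i ∈ Finset.univ, (0:ℝ) ≤ (w i)⁻¹ * (A.mulVec z i)^2 := by
      intro i _
      have := (hw i).le
      positivity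
    have hallz : ∀ i ∈ Finset.univ, (w i)⁻¹ * (A.mulVec z i)^2 = 0 :=
      (Finset.sum_eq_zero_iff_of_nonneg hterm).mp hq
    have hAz : A.mulVec z = 0 := by
      funext i
      have h1 := hallz i (Finset.mem_univ i)
      have h2 : (w i)⁻¹ ≠ 0 := inv_ne_zero (hw i).ne'
      have h3 : (A.mulVec z i)^2 = 0 := by
        rcases mul_eq_zero.mp h1 with h | h
        · exact absurd h h2
        · exact h
      simpa using pow_eq_zero_iff (n := 2) (by omega) |>.mp h3
    exact A_inj A hrank z hAz
  intro x y hxy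
  have : M.mulVec (x - y) = 0 := by
    rw [Matrix.mulVec_sub, hxy, sub_self]
  exact sub_eq_zero.mp (hzero _ this)

lemma M_symm (hw : ∀ i, 0 < w i) :
    (Aᵀ * (Matrix.diagonal w)⁻¹ * A)ᵀ = Aᵀ * (Matrix.diagonal w)⁻¹ * A := by
  rw [diag_inv w hw]
  rw [Matrix.transpose_mul, Matrix.transpose_mul, Matrix.transpose_transpose,
    Matrix.diagonal_transpose, Matrix.mul_assoc]

lemma B_symm (hw : ∀ i, 0 < w i) :
    ((Aᵀ * (Matrix.diagonal w)⁻¹ * A)⁻¹)ᵀ = (Aᵀ * (Matrix.diagonal w)⁻¹ * A)⁻¹ := by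
  rw [Matrix.transpose_nonsing_inv, M_symm A w hw]

lemma vv_symm (hw : ∀ i, 0 < w i) (i j : Fin n) :
    A i ⬝ᵥ (Aᵀ * (Matrix.diagonal w)⁻¹ * A)⁻¹.mulVec (A j)
      = A j ⬝ᵥ (Aᵀ * (Matrix.diagonal w)⁻¹ * A)⁻¹.mulVec (A i) := by
  set B := (Aᵀ * (Matrix.diagonal w)⁻¹ * A)⁻¹ with hB
  rw [Matrix.dotProduct_mulVec]
  have h1 : A i ᵥ* B = B *ᵥ A i := by
    rw [← Matrix.vecMul_transpose]
    rw [show Bᵀ = B from B_symm A w hw]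
  rw [h1, dotProduct_comm]

lemma reproducing (hw : ∀ i, 0 < w i) (hrank : A.rank = d) (x : Fin d → ℝ) (i : Fin n) :
    A.mulVec x i = ∑ j, (w j)⁻¹ * (A i ⬝ᵥ (Aᵀ * (Matrix.diagonal w)⁻¹ * A)⁻¹.mulVec (A j))
      * A.mulVec x j := by
  set M := Aᵀ * (Matrix.diagonal w)⁻¹ * A with hM
  set B := M⁻¹ with hB
  have hBM : B * M = 1 := Matrix.nonsing_inv_mul M (M_det A w hw hrank)
  have hx : x = B.mulVec (M.mulVec x) := by
    rw [Matrix.mulVec_mulVec, hBM, Matrix.one_mulVec]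
  have hz : A.mulVec x i = A i ⬝ᵥ x := rfl
  conv_lhs => rw [hz, hx]
  rw [Mmat_mulVec A w hw]
  rw [Matrix.mulVec_mulVec]
  rw [Matrix.dotProduct_mulVec]
  rw [← Matrix.vecMul_vecMul]
  have h1 : A i ᵥ* B = B *ᵥ A i := by
    rw [← Matrix.vecMul_transpose, show Bᵀ = B from B_symm A w hw]
  rw [h1, Matrix.vecMul_transpose]
  simp only [dotProduct]
  apply Finset.sum_congr rfl
  intro j _
  have h2 : (A *ᵥ (B *ᵥ A i)) j = A j ⬝ᵥ (B *ᵥ A i) := rfl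
  rw [h2, ← vv_symm A w hw i j]
  have h4 : (∑ x, A i x * (B *ᵥ A j) x) = A i ⬝ᵥ (B *ᵥ A j) := rfl
  rw [h4, ← hM, ← hB]
  ring

lemma key_a (hw : ∀ i, 0 < w i) (hrank : A.rank = d)
    (hlew : ∀ i, A i ⬝ᵥ (Aᵀ * (Matrix.diagonal w)⁻¹ * A)⁻¹.mulVec (A i) = w i ^ 2) (j : Fin n) :
    ∑ i, (w i)⁻¹ * (A j ⬝ᵥ (Aᵀ * (Matrix.diagonal w)⁻¹ * A)⁻¹.mulVec (A i))^2 = w j ^ 2 := by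
  set M := Aᵀ * (Matrix.diagonal w)⁻¹ * A with hM
  set B := M⁻¹ with hB
  have hMB : M * B = 1 := Matrix.mul_nonsing_inv M (M_det A w hw hrank)
  have hq := quad_form A w hw (B.mulVec (A j))
  have h1 : M.mulVec (B.mulVec (A j)) = A j := by
    rw [Matrix.mulVec_mulVec, hMB, Matrix.one_mulVec]
  have h2 : (B.mulVec (A j)) ⬝ᵥ M.mulVec (B.mulVec (A j)) = w j ^ 2 := by
    rw [h1, dotProduct_comm]
    exact hlew j
  rw [h2] at hq
  rw [hq]
  apply Finset.sum_congr rfl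
  intro i _
  have h3 : A.mulVec (B.mulVec (A j)) i = A i ⬝ᵥ (B.mulVec (A j)) := rfl
  rw [h3, ← vv_symm A w hw j i]

lemma key_b (hw : ∀ i, 0 < w i) (hrank : A.rank = d)
    (hlew : ∀ i, A i ⬝ᵥ (Aᵀ * (Matrix.diagonal w)⁻¹ * A)⁻¹.mulVec (A i) = w i ^ 2)
    (U : ℝ) (hU : ∀ i, w i ≤ U) (j : Fin n) :
    ∑ i, (A i ⬝ᵥ (Aᵀ * (Matrix.diagonal w)⁻¹ * A)⁻¹.mulVec (A j))^2 ≤ U * w j ^ 2 := by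
  have h1 : ∀ i, (A i ⬝ᵥ (Aᵀ * (Matrix.diagonal w)⁻¹ * A)⁻¹.mulVec (A j))^2
      = w i * ((w i)⁻¹ * (A j ⬝ᵥ (Aᵀ * (Matrix.diagonal w)⁻¹ * A)⁻¹.mulVec (A i))^2) := by
    intro i
    rw [vv_symm A w hw i j, ← mul_assoc, mul_inv_cancel₀ (hw i).ne', one_mul]
  calc ∑ i, (A i ⬝ᵥ (Aᵀ * (Matrix.diagonal w)⁻¹ * A)⁻¹.mulVec (A j))^2
      = ∑ i, w i * ((w i)⁻¹ * (A j ⬝ᵥ (Aᵀ * (Matrix.diagonal w)⁻¹ * A)⁻¹.mulVec (A i))^2) := by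
        apply Finset.sum_congr rfl
        intro i _
        exact h1 i
    _ ≤ ∑ i, U * ((w i)⁻¹ * (A j ⬝ᵥ (Aᵀ * (Matrix.diagonal w)⁻¹ * A)⁻¹.mulVec (A i))^2) := by
        apply Finset.sum_le_sum
        intro i _
        apply mul_le_mul_of_nonneg_right (hU i)
        have := (hw i).le
        positivity
    _ = U * w j ^ 2 := by
        rw [← Finset.mul_sum, key_a A w hw hrank hlew j]

end LA


section SupTools

variable {α : Type*} [Nonempty α]

lemma core_plus (u v : α → ℝ)
    (h1 : BddAbove (Set.range fun x => u x + v x))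
    (h2 : BddAbove (Set.range fun x => u x - v x)) :
    (⨆ x, (u x + |v x|)) ≤ max (⨆ x, u x + v x) (⨆ x, u x - v x) := by
  apply ciSup_le
  intro x
  rcases abs_cases (v x) with ⟨h, _⟩ | ⟨h, _⟩
  · rw [h]
    exact le_trans (le_ciSup h1 x) (le_max_left _ _)
  · rw [h]
    exact le_trans (le_ciSup h2 x) (le_max_right _ _)

lemma core_minus (u v : α → ℝ)
    (h1 : BddAbove (Set.range fun x => u x + v x))
    (h2 : BddAbove (Set.range fun x => u x - v x)) :
    (⨆ x, (u x - |v x|)) ≤ min (⨆ x, u x + v x) (⨆ x, u x - v x) := by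
  apply ciSup_le
  intro x
  apply le_min
  · exact le_trans (by have := abs_nonneg (v x); have := neg_abs_le (v x); linarith) (le_ciSup h1 x)
  · exact le_trans (by have := le_abs_self (v x); linarith) (le_ciSup h2 x)

end SupTools

noncomputable def Fl (l t : ℝ) : ℝ := (max t 0) ^ l

lemma Fl_nonneg (l t : ℝ) : 0 ≤ Fl l t := Real.rpow_nonneg (le_max_right _ _) _

lemma Fl_mono (l : ℝ) (hl : 0 ≤ l) {s t : ℝ} (h : s ≤ t) : Fl l s ≤ Fl l t :=
  Real.rpow_le_rpow (le_max_right _ _) (max_le_max h le_rfl) hl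

lemma Fl_max_min (l a b : ℝ) : Fl l (max a b) + Fl l (min a b) = Fl l a + Fl l b := by
  rcases le_total a b with h | h
  · rw [max_eq_right h, min_eq_left h, add_comm]
  · rw [max_eq_left h, min_eq_right h]

lemma rpow_le_Fl_add (l a b s : ℝ) (hl : 0 ≤ l) (hs : 0 ≤ s) (h : s ≤ max a b) :
    s ^ l ≤ Fl l a + Fl l b := by
  rcases le_total a b with hab | hab
  · rw [max_eq_right hab] at h
    have h1 : s ^ l ≤ Fl l b :=
      Real.rpow_le_rpow hs (le_trans h (le_max_left _ _)) hl
    linarith [Fl_nonneg l a]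
  · rw [max_eq_left hab] at h
    have h1 : s ^ l ≤ Fl l a :=
      Real.rpow_le_rpow hs (le_trans h (le_max_left _ _)) hl
    linarith [Fl_nonneg l b]

lemma sgn_not (b : Bool) : sgn (!b) = - sgn b := by cases b <;> simp [sgn]

lemma sgn_mul_le_abs (b : Bool) (t : ℝ) : sgn b * t ≤ |t| := by
  calc sgn b * t ≤ |sgn b * t| := le_abs_self _
    _ = |t| := by rw [abs_mul, sgn_abs, one_mul]

section MainCase

variable {n d : ℕ}

lemma main_case (hn : 0 < n) (hd : 0 < d) (A : Matrix (Fin n) (Fin d) ℝ)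
    (hrank : A.rank = d) (w : Fin n → ℝ) (hw : ∀ i, 0 < w i)
    (hlew : ∀ i, A i ⬝ᵥ (Aᵀ * (Matrix.diagonal w)⁻¹ * A)⁻¹.mulVec (A i) = w i ^ 2)
    (U : ℝ) (hU : ∀ i, w i ≤ U) (l : ℝ) (hl : 1 ≤ l) :
    (∑ σ : Fin n → Bool,
        (⨆ x : {x : Fin d → ℝ // (∑ i, |A.mulVec x i|) = 1},
          |∑ i, (if σ i then (1 : ℝ) else -1) * (|A i ⬝ᵥ x.1|)|) ^ l) / 2 ^ n
      ≤ 2 * n * (3 * l * U) ^ (l / 2) := by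
  have hl0 : (0:ℝ) ≤ l := le_trans zero_le_one hl
  -- the index type
  set X := {x : Fin d → ℝ // (∑ i, |A.mulVec x i|) = 1} with hX
  -- nonemptiness
  have hXne : Nonempty X := by
    set x0 : Fin d → ℝ := Pi.single ⟨0, hd⟩ (1:ℝ) with hx0
    have hx0ne : x0 ≠ 0 := by
      intro h
      have := congrFun h ⟨0, hd⟩
      simp [hx0] at this
    have hAx0 : A.mulVec x0 ≠ 0 := by
      intro h
      exact hx0ne (A_inj A hrank x0 h)
    set c : ℝ := ∑ i, |A.mulVec x0 i| with hc
    have hcpos : 0 < c := by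
      rcases lt_or_eq_of_le (Finset.sum_nonneg (fun i _ => abs_nonneg (A.mulVec x0 i))) with h | h
      · exact h
      · exfalso
        apply hAx0
        funext i
        have := (Finset.sum_eq_zero_iff_of_nonneg (fun i _ => abs_nonneg (A.mulVec x0 i))).mp h.symm
        have hi := this i (Finset.mem_univ i)
        simpa using abs_eq_zero.mp hi
    refine ⟨⟨c⁻¹ • x0, ?_⟩⟩
    have hsmul : A.mulVec (c⁻¹ • x0) = c⁻¹ • A.mulVec x0 := by
      rw [Matrix.mulVec_smul]
    rw [hsmul]
    have : ∀ i, |(c⁻¹ • A.mulVec x0) i| = c⁻¹ * |A.mulVec x0 i| := by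
      intro i
      simp only [Pi.smul_apply, smul_eq_mul, abs_mul, abs_inv, abs_of_pos hcpos]
    simp only [this]
    rw [← Finset.mul_sum, ← hc, inv_mul_cancel₀ hcpos.ne']
  -- the family
  set z : X → Fin n → ℝ := fun x i => A.mulVec x.1 i with hz
  have hz1 : ∀ x : X, ∑ i, |z x i| = 1 := fun x => x.2
  -- mixed functions
  set f : Finset (Fin n) → (Fin n → Bool) → X → ℝ :=
    fun S σ x => ∑ i ∈ S, sgn (σ i) * z x i + ∑ i ∈ Sᶜ, sgn (σ i) * |z x i| with hf
  have hfle1 : ∀ S σ x, f S σ x ≤ 1 := by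
    intro S σ x
    have h1 : ∑ i ∈ S, sgn (σ i) * z x i ≤ ∑ i ∈ S, |z x i| :=
      Finset.sum_le_sum (fun i _ => sgn_mul_le_abs _ _)
    have h2 : ∑ i ∈ Sᶜ, sgn (σ i) * |z x i| ≤ ∑ i ∈ Sᶜ, |z x i| := by
      apply Finset.sum_le_sum
      intro i _
      calc sgn (σ i) * |z x i| ≤ |(|z x i|)| := sgn_mul_le_abs _ _
        _ = |z x i| := abs_abs _
    calc f S σ x ≤ (∑ i ∈ S, |z x i|) + ∑ i ∈ Sᶜ, |z x i| := add_le_add h1 h2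
      _ = ∑ i, |z x i| := Finset.sum_add_sum_compl S _
      _ = 1 := hz1 x
  have hbdd : ∀ S σ, BddAbove (Set.range (f S σ)) := by
    intro S σ
    refine ⟨1, ?_⟩
    rintro _ ⟨x, rfl⟩
    exact hfle1 S σ x
  set h : Finset (Fin n) → (Fin n → Bool) → ℝ := fun S σ => ⨆ x, f S σ x with hh
  -- contraction
  have contraction : ∀ S : Finset (Fin n),
      (∑ σ : Fin n → Bool, Fl l (h ∅ σ)) ≤ ∑ σ : Fin n → Bool, Fl l (h S σ) := by
    intro S
    induction S using Finset.induction_on with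
    | empty => exact le_rfl
    | @insert a S' ha ih =>
      refine le_trans ih ?_
      rw [sum_bool_split a (fun σ => Fl l (h S' σ)),
        sum_bool_split a (fun σ => Fl l (h (insert a S') σ))]
      apply Finset.sum_le_sum
      intro ρ _
      set σt := (Equiv.funSplitAt a Bool).symm (true, ρ) with hσt
      set σf := (Equiv.funSplitAt a Bool).symm (false, ρ) with hσf
      have hagree : ∀ i : Fin n, i ≠ a → σt i = σf i := by
        intro i hi
        rw [hσt, hσf, funSplitAt_symm_ne a true ρ hi, funSplitAt_symm_ne a false ρ hi]
      have hta : σt a = true := funSplitAt_symm_self a true ρ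
      have hfa : σf a = false := funSplitAt_symm_self a false ρ
      set u : X → ℝ := fun x =>
        ∑ i ∈ S', sgn (σt i) * z x i + ∑ i ∈ S'ᶜ \ {a}, sgn (σt i) * |z x i| with hu
      set v : X → ℝ := fun x => z x a with hv
      have haC : a ∈ S'ᶜ := Finset.mem_compl.mpr ha
      have e1 : f S' σt = fun x => u x + |v x| := by
        funext x
        rw [hf]
        simp only
        rw [Finset.sum_eq_sum_sdiff_singleton_add haC (fun i => sgn (σt i) * |z x i|)]
        rw [hta]
        show (∑ i ∈ S', sgn (σt i) * z x i) + ((∑ i ∈ S'ᶜ \ {a}, sgn (σt i) * |z x i|) + sgn true * |z x a|) = _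
        rw [show sgn true = (1:ℝ) from rfl]
        ring
      have e2 : f S' σf = fun x => u x - |v x| := by
        funext x
        rw [hf]
        simp only
        rw [Finset.sum_eq_sum_sdiff_singleton_add haC (fun i => sgn (σf i) * |z x i|)]
        rw [hfa]
        have hs1 : ∑ i ∈ S', sgn (σf i) * z x i = ∑ i ∈ S', sgn (σt i) * z x i := by
          apply Finset.sum_congr rfl
          intro i hi
          rw [hagree i (fun hia => ha (hia ▸ hi))]
        have hs2 : ∑ i ∈ S'ᶜ \ {a}, sgn (σf i) * |z x i| = ∑ i ∈ S'ᶜ \ {a}, sgn (σt i) * |z x i| := by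
          apply Finset.sum_congr rfl
          intro i hi
          rw [hagree i (Finset.notMem_singleton.mp (Finset.mem_sdiff.mp hi).2)]
        rw [hs1, hs2]
        show _ = (∑ i ∈ S', sgn (σt i) * z x i + ∑ i ∈ S'ᶜ \ {a}, sgn (σt i) * |z x i|) - |z x a|
        rw [show sgn false = (-1:ℝ) from rfl]
        ring
      have e3 : f (insert a S') σt = fun x => u x + v x := by
        funext x
        rw [hf]
        simp only
        rw [Finset.sum_insert ha, Finset.compl_insert, Finset.erase_eq, hta]
        show sgn true * z x a + (∑ i ∈ S', sgn (σt i) * z x i) + ∑ i ∈ S'ᶜ \ {a}, sgn (σt i) * |z x i| = _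
        rw [show sgn true = (1:ℝ) from rfl]
        ring
      have e4 : f (insert a S') σf = fun x => u x - v x := by
        funext x
        rw [hf]
        simp only
        rw [Finset.sum_insert ha, Finset.compl_insert, Finset.erase_eq, hfa]
        have hs1 : ∑ i ∈ S', sgn (σf i) * z x i = ∑ i ∈ S', sgn (σt i) * z x i := by
          apply Finset.sum_congr rfl
          intro i hi
          rw [hagree i (fun hia => ha (hia ▸ hi))]
        have hs2 : ∑ i ∈ S'ᶜ \ {a}, sgn (σf i) * |z x i| = ∑ i ∈ S'ᶜ \ {a}, sgn (σt i) * |z x i| := by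
          apply Finset.sum_congr rfl
          intro i hi
          rw [hagree i (Finset.notMem_singleton.mp (Finset.mem_sdiff.mp hi).2)]
        rw [hs1, hs2]
        show sgn false * z x a + (∑ i ∈ S', sgn (σt i) * z x i) + ∑ i ∈ S'ᶜ \ {a}, sgn (σt i) * |z x i| = _
        rw [show sgn false = (-1:ℝ) from rfl]
        ring
      have hb3 : BddAbove (Set.range fun x => u x + v x) := by
        rw [show (fun x => u x + v x) = f (insert a S') σt from e3.symm]
        exact hbdd _ _
      have hb4 : BddAbove (Set.range fun x => u x - v x) := by
        rw [show (fun x => u x - v x) = f (insert a S') σf from e4.symm]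
        exact hbdd _ _
      have hcp : h S' σt ≤ max (h (insert a S') σt) (h (insert a S') σf) := by
        rw [hh]
        simp only
        rw [show (f S' σt) = fun x => u x + |v x| from e1, e3, e4]
        exact core_plus u v hb3 hb4
      have hcm : h S' σf ≤ min (h (insert a S') σt) (h (insert a S') σf) := by
        rw [hh]
        simp only
        rw [show (f S' σf) = fun x => u x - |v x| from e2, e3, e4]
        exact core_minus u v hb3 hb4
      calc Fl l (h S' σt) + Fl l (h S' σf)
          ≤ Fl l (max (h (insert a S') σt) (h (insert a S') σf))
            + Fl l (min (h (insert a S') σt) (h (insert a S') σf)) :=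
            add_le_add (Fl_mono l hl0 hcp) (Fl_mono l hl0 hcm)
        _ = Fl l (h (insert a S') σt) + Fl l (h (insert a S') σf) := Fl_max_min _ _ _
  -- Step 1: remove outer absolute value at cost of factor 2
  have hnot : ∀ σ : Fin n → Bool, ∀ x : X,
      -(∑ i, sgn (σ i) * |z x i|) = ∑ i, sgn ((fun i => !σ i) i) * |z x i| := by
    intro σ x
    rw [← Finset.sum_neg_distrib]
    apply Finset.sum_congr rfl
    intro i _
    rw [sgn_not]
    ring
  have habs_bdd : ∀ σ : Fin n → Bool,
      BddAbove (Set.range fun x : X => |∑ i, sgn (σ i) * (|z x i|)|) := by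
    intro σ
    refine ⟨1, ?_⟩
    rintro _ ⟨x, rfl⟩
    calc |∑ i, sgn (σ i) * (|z x i|)| ≤ ∑ i, |sgn (σ i) * (|z x i|)| :=
          Finset.abs_sum_le_sum_abs _ _
      _ = ∑ i, |z x i| := by
          apply Finset.sum_congr rfl
          intro i _
          rw [abs_mul, sgn_abs, one_mul, abs_abs]
      _ = 1 := hz1 x
  have hf0 : ∀ (σ : Fin n → Bool) (x : X), f ∅ σ x = ∑ i, sgn (σ i) * |z x i| := by
    intro σ x
    rw [hf]
    simp [Finset.compl_empty]
  have x₀ : X := Classical.choice hXne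
  set s0 : (Fin n → Bool) → ℝ := fun σ => ⨆ x : X, |∑ i, sgn (σ i) * (|z x i|)| with hs0
  have step1 : ∀ σ : Fin n → Bool,
      (s0 σ) ^ l ≤ Fl l (h ∅ σ) + Fl l (h ∅ (fun i => !σ i)) := by
    intro σ
    have h0 : 0 ≤ s0 σ :=
      le_trans (abs_nonneg _) (le_ciSup (habs_bdd σ) x₀)
    have h1 : s0 σ ≤ max (h ∅ σ) (h ∅ (fun i => !σ i)) := by
      apply ciSup_le
      intro x
      rcases abs_cases (∑ i, sgn (σ i) * |z x i|) with ⟨hc, _⟩ | ⟨hc, _⟩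
      · rw [hc, ← hf0 σ x]
        exact le_trans (le_ciSup (hbdd ∅ σ) x) (le_max_left _ _)
      · rw [hc, hnot σ x, ← hf0 (fun i => !σ i) x]
        exact le_trans (le_ciSup (hbdd ∅ (fun i => !σ i)) x) (le_max_right _ _)
    exact rpow_le_Fl_add l _ _ _ hl0 h0 h1
  have hreindex : ∑ σ : Fin n → Bool, Fl l (h ∅ (fun i => !σ i))
      = ∑ σ : Fin n → Bool, Fl l (h ∅ σ) := by
    set e : (Fin n → Bool) ≃ (Fin n → Bool) :=
      ⟨fun σ i => !σ i, fun σ i => !σ i,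
       fun σ => by funext i; simp, fun σ => by funext i; simp⟩ with he
    exact Fintype.sum_equiv e _ _ (fun σ => rfl)
  -- Step 3: bound the de-absed sup by max of projection coordinates
  set vmat : Fin n → Fin n → ℝ :=
    fun i j => A i ⬝ᵥ (Aᵀ * (Matrix.diagonal w)⁻¹ * A)⁻¹.mulVec (A j) with hvv
  set g : (Fin n → Bool) → Fin n → ℝ :=
    fun σ j => ∑ i, sgn (σ i) * ((w j)⁻¹ * vmat i j) with hg
  have j0 : Fin n := ⟨0, hn⟩
  have huniv_ne : (Finset.univ : Finset (Fin n)).Nonempty := ⟨j0, Finset.mem_univ j0⟩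
  have step3 : ∀ σ : Fin n → Bool, Fl l (h Finset.univ σ) ≤ ∑ j, |g σ j| ^ l := by
    intro σ
    set M0 : ℝ := Finset.univ.sup' huniv_ne (fun j => |g σ j|) with hM0
    have hM0nn : 0 ≤ M0 :=
      le_trans (abs_nonneg (g σ j0)) (Finset.le_sup' (f := fun j => |g σ j|) (Finset.mem_univ j0))
    have hfuniv : ∀ x : X, f Finset.univ σ x = ∑ i, sgn (σ i) * z x i := by
      intro x
      rw [hf]
      simp [Finset.compl_univ]
    have hbound : ∀ x : X, f Finset.univ σ x ≤ M0 := by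
      intro x
      rw [hfuniv x]
      calc ∑ i, sgn (σ i) * z x i
          = ∑ i, sgn (σ i) * (∑ j, (w j)⁻¹ * vmat i j * z x j) := by
            apply Finset.sum_congr rfl
            intro i _
            congr 1
            exact reproducing A w hw hrank x.1 i
        _ = ∑ i, ∑ j, sgn (σ i) * ((w j)⁻¹ * vmat i j) * z x j := by
            apply Finset.sum_congr rfl
            intro i _
            rw [Finset.mul_sum]
            apply Finset.sum_congr rfl
            intro j _
            ring
        _ = ∑ j, ∑ i, sgn (σ i) * ((w j)⁻¹ * vmat i j) * z x j := Finset.sum_comm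
        _ = ∑ j, g σ j * z x j := by
            apply Finset.sum_congr rfl
            intro j _
            rw [hg]
            simp only
            rw [Finset.sum_mul]
        _ ≤ ∑ j, M0 * |z x j| := by
            apply Finset.sum_le_sum
            intro j _
            calc g σ j * z x j ≤ |g σ j * z x j| := le_abs_self _
              _ = |g σ j| * |z x j| := abs_mul _ _
              _ ≤ M0 * |z x j| :=
                  mul_le_mul_of_nonneg_right (Finset.le_sup' (f := fun j => |g σ j|) (Finset.mem_univ j)) (abs_nonneg _)
        _ = M0 := by rw [← Finset.mul_sum, hz1 x, mul_one]
    have hsup : h Finset.univ σ ≤ M0 := ciSup_le hbound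
    have hFl : Fl l (h Finset.univ σ) ≤ M0 ^ l := by
      rw [Fl]
      exact Real.rpow_le_rpow (le_max_right _ _) (max_le hsup hM0nn) hl0
    obtain ⟨j₁, _, hj₁⟩ := Finset.exists_mem_eq_sup' huniv_ne (fun j => |g σ j|)
    refine hFl.trans ?_
    rw [← hM0] at hj₁
    rw [hj₁]
    exact Finset.single_le_sum (f := fun j => |g σ j| ^ l)
      (fun j _ => Real.rpow_nonneg (abs_nonneg _) _) (Finset.mem_univ j₁)
  -- Step 4: Khintchine for each coordinate
  have step4 : ∀ j : Fin n, ∑ σ : Fin n → Bool, |g σ j| ^ l ≤ 2^n * (3 * l * U) ^ (l/2) := by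
    intro j
    have kh := khintchine (fun i => (w j)⁻¹ * vmat i j) hl
    rw [Fintype.card_fin] at kh
    refine kh.trans ?_
    apply mul_le_mul_of_nonneg_left _ (by positivity)
    have hb2 : ∑ i, ((w j)⁻¹ * vmat i j)^2 ≤ U := by
      have h1 : ∑ i, ((w j)⁻¹ * vmat i j)^2 = ((w j)⁻¹)^2 * ∑ i, (vmat i j)^2 := by
        rw [Finset.mul_sum]
        apply Finset.sum_congr rfl
        intro i _
        ring
      rw [h1]
      have h2 := key_b A w hw hrank hlew U hU j
      calc ((w j)⁻¹)^2 * ∑ i, (vmat i j)^2 ≤ ((w j)⁻¹)^2 * (U * w j ^ 2) :=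
            mul_le_mul_of_nonneg_left h2 (by positivity)
        _ = U := by
            have hwj : w j ≠ 0 := (hw j).ne'
            field_simp
    apply Real.rpow_le_rpow _ _ (by positivity)
    · have : (0:ℝ) ≤ ∑ i, ((w j)⁻¹ * vmat i j)^2 :=
        Finset.sum_nonneg (fun i _ => sq_nonneg _)
      positivity
    · have h3 : (0:ℝ) ≤ 3 * l := by linarith
      exact mul_le_mul_of_nonneg_left hb2 h3
  -- assemble
  have hgoal : ∀ σ : Fin n → Bool,
      (⨆ x : X, |∑ i, (if σ i then (1:ℝ) else -1) * (|A i ⬝ᵥ x.1|)|) = s0 σ := fun σ => rfl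
  show (∑ σ : Fin n → Bool, (s0 σ) ^ l) / 2 ^ n ≤ _
  rw [div_le_iff₀ (by positivity : (0:ℝ) < 2^n)]
  calc ∑ σ : Fin n → Bool, (s0 σ) ^ l
      ≤ ∑ σ : Fin n → Bool, (Fl l (h ∅ σ) + Fl l (h ∅ (fun i => !σ i))) :=
        Finset.sum_le_sum (fun σ _ => step1 σ)
    _ = ∑ σ : Fin n → Bool, Fl l (h ∅ σ) + ∑ σ : Fin n → Bool, Fl l (h ∅ (fun i => !σ i)) :=
        Finset.sum_add_distrib
    _ = 2 * ∑ σ : Fin n → Bool, Fl l (h ∅ σ) := by rw [hreindex]; ring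
    _ ≤ 2 * ∑ σ : Fin n → Bool, Fl l (h Finset.univ σ) := by
        have := contraction Finset.univ
        linarith
    _ ≤ 2 * ∑ σ : Fin n → Bool, ∑ j, |g σ j| ^ l := by
        have := Finset.sum_le_sum (fun σ (_ : σ ∈ Finset.univ) => step3 σ)
        linarith
    _ = 2 * ∑ j, ∑ σ : Fin n → Bool, |g σ j| ^ l := by rw [Finset.sum_comm]
    _ ≤ 2 * ∑ _j : Fin n, 2^n * (3 * l * U) ^ (l/2) := by
        have := Finset.sum_le_sum (fun j (_ : j ∈ Finset.univ) => step4 j)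
        linarith
    _ = 2 * ↑n * (3 * l * U) ^ (l / 2) * 2 ^ n := by
        rw [Finset.sum_const, Finset.card_univ, Fintype.card_fin, nsmul_eq_mul]
        ring

end MainCase

theorem stmt17 : ∃ C : ℝ, 0 < C ∧
    ∀ (n d : ℕ) (A : Matrix (Fin n) (Fin d) ℝ), A.rank = d →
    ∀ w : Fin n → ℝ, (∀ i, 0 < w i) →
    (∀ i, A i ⬝ᵥ (Aᵀ * (Matrix.diagonal w)⁻¹ * A)⁻¹.mulVec (A i) = w i ^ 2) →
    ∀ U : ℝ, (∀ i, w i ≤ U) →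
    ∀ l : ℝ, 1 ≤ l →
    (∑ σ : Fin n → Bool,
        (⨆ x : {x : Fin d → ℝ // (∑ i, |A.mulVec x i|) = 1},
          |∑ i, (if σ i then (1 : ℝ) else -1) * (|A i ⬝ᵥ x.1|)|) ^ l) / 2 ^ n
      ≤ 2 * n * (C * l * U) ^ (l / 2) := by
  refine ⟨3, by norm_num, ?_⟩
  intro n d A hrank w hw hlew U hU l hl
  have hlne : l ≠ 0 := by positivity
  rcases Nat.eq_zero_or_pos n with hn | hn
  · subst hn
    have hXe : IsEmpty {x : Fin d → ℝ // (∑ i : Fin 0, |A.mulVec x i|) = 1} := by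
      constructor
      rintro ⟨x, hx⟩
      simp at hx
    have hsup0 : ∀ σ : Fin 0 → Bool,
        (⨆ x : {x : Fin d → ℝ // (∑ i, |A.mulVec x i|) = 1},
          |∑ i, (if σ i then (1 : ℝ) else -1) * (|A i ⬝ᵥ x.1|)|) = 0 :=
      fun σ => by rw [iSup, Set.range_eq_empty _, Real.sSup_empty]
    simp only [hsup0, Real.zero_rpow hlne, Finset.sum_const_zero, zero_div]
    simp
  · rcases Nat.eq_zero_or_pos d with hd | hd
    · subst hd
      have hXe : IsEmpty {x : Fin 0 → ℝ // (∑ i, |A.mulVec x i|) = 1} := by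
        constructor
        rintro ⟨x, hx⟩
        have hz : A.mulVec x = 0 := by
          funext i
          simp [Matrix.mulVec, dotProduct]
        rw [hz] at hx
        simp at hx
      have hsup0 : ∀ σ : Fin n → Bool,
          (⨆ x : {x : Fin 0 → ℝ // (∑ i, |A.mulVec x i|) = 1},
            |∑ i, (if σ i then (1 : ℝ) else -1) * (|A i ⬝ᵥ x.1|)|) = 0 :=
        fun σ => by rw [iSup, Set.range_eq_empty _, Real.sSup_empty]
      simp only [hsup0, Real.zero_rpow hlne, Finset.sum_const_zero, zero_div]
      have hU0 : (0:ℝ) < U := lt_of_lt_of_le (hw ⟨0, hn⟩) (hU _)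
      positivity
    · exact main_case hn hd A hrank w hw hlew U hU l hl
end

section
/- (Khintchine moment inequality) Let σ_1,…,σ_n be independent Rademacher (±1) random variables and x_1,…,x_n real numbers. Then for any real l ≥ 1 there is an absolute constant C such that E[|Σ_i σ_i x_i|^l] ≤ (C·l·Σ_i x_i²)^{l/2}. -/
open Finset

lemma kh_choose_bound (m : ℕ) : ∀ k, k ≤ m → (2*m).choose (2*k) ≤ (2*m)^k * m.choose k := by
  intro k
  induction k with
  | zero => intro _; simp
  | succ k ih =>
    intro hk
    have hk' : k ≤ m := by omega
    have IH := ih hk'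
    obtain ⟨j, hj⟩ : ∃ j, m = k + 1 + j := ⟨m - (k+1), by omega⟩
    have h1 : (2*m).choose (2*k+1) * (2*k+1) = (2*m).choose (2*k) * (2*j+2) := by
      have := Nat.choose_succ_right_eq (2*m) (2*k)
      have e : 2*m - 2*k = 2*j+2 := by omega
      rwa [e] at this
    have h2 : (2*m).choose (2*k+2) * (2*k+2) = (2*m).choose (2*k+1) * (2*j+1) := by
      have := Nat.choose_succ_right_eq (2*m) (2*k+1)
      have e : 2*m - (2*k+1) = 2*j+1 := by omega
      rwa [e] at this
    have h3 : m.choose (k+1) * (k+1) = m.choose k * (j+1) := by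
      have := Nat.choose_succ_right_eq m k
      have e : m - k = j+1 := by omega
      rwa [e] at this
    have key : (2*m).choose (2*(k+1)) * ((2*k+2)*(2*k+1))
        ≤ ((2*m)^(k+1) * m.choose (k+1)) * ((2*k+2)*(2*k+1)) := by
      have e1 : (2*m).choose (2*(k+1)) * ((2*k+2)*(2*k+1))
          = ((2*m).choose (2*k) * (2*j+2)) * (2*j+1) := by
        calc (2*m).choose (2*(k+1)) * ((2*k+2)*(2*k+1))
            = ((2*m).choose (2*k+2) * (2*k+2)) * (2*k+1) := by ring_nf
          _ = ((2*m).choose (2*k+1) * (2*j+1)) * (2*k+1) := by rw [h2]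
          _ = ((2*m).choose (2*k+1) * (2*k+1)) * (2*j+1) := by ring
          _ = ((2*m).choose (2*k) * (2*j+2)) * (2*j+1) := by rw [h1]
      rw [e1]
      have step1 : ((2*m).choose (2*k) * (2*j+2)) * (2*j+1)
          ≤ (((2*m)^k * m.choose k) * (2*j+2)) * ((2*m) * (2*k+1)) := by
        have hj1 : 2*j+1 ≤ 2*m := by omega
        have hj2 : 2*j+1 ≤ (2*m) * (2*k+1) := le_trans hj1 (Nat.le_mul_of_pos_right _ (by omega))
        exact Nat.mul_le_mul (Nat.mul_le_mul_right _ IH) hj2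
      refine le_trans step1 (le_of_eq ?_)
      calc (((2*m)^k * m.choose k) * (2*j+2)) * ((2*m) * (2*k+1))
          = (2*m)^(k+1) * ((m.choose k * (j+1)) * (2 * (2*k+1))) := by ring
        _ = (2*m)^(k+1) * ((m.choose (k+1) * (k+1)) * (2 * (2*k+1))) := by rw [h3]
        _ = ((2*m)^(k+1) * m.choose (k+1)) * ((2*k+2)*(2*k+1)) := by ring
    exact Nat.le_of_mul_le_mul_right key (by positivity)

lemma kh_sum_even (g : ℕ → ℝ) : ∀ m : ℕ,
    ∑ j ∈ range (2*m+1), (if Even j then g j else 0) = ∑ k ∈ range (m+1), g (2*k) := by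
  intro m
  induction m with
  | zero => simp
  | succ m ih =>
    have e : 2*(m+1)+1 = (2*m+1) + 1 + 1 := by ring
    rw [e, Finset.sum_range_succ, Finset.sum_range_succ, ih, Finset.sum_range_succ]
    have ho : ¬ Even (2*m+1) := by simp [Nat.even_add_one]
    have he : Even (2*m+1+1) := by refine ⟨m+1, by ring⟩
    rw [if_neg ho, if_pos he, Finset.sum_range_succ, Finset.sum_range_succ]
    have e2 : 2*(m+1) = 2*m+1+1 := by ring
    rw [e2]; ring

lemma kh_pair (a c : ℝ) (m : ℕ) :
    (a + c)^(2*m) + (a - c)^(2*m)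
      = 2 * ∑ k ∈ range (m+1), a^(2*k) * c^(2*(m-k)) * ((2*m).choose (2*k)) := by
  have hsub : a - c = a + (-c) := by ring
  rw [hsub, add_pow, add_pow, ← Finset.sum_add_distrib]
  have hcong : ∀ j ∈ range (2*m+1),
      a ^ j * c ^ (2*m - j) * ((2*m).choose j) + a ^ j * (-c) ^ (2*m - j) * ((2*m).choose j)
      = if Even j then 2 * (a ^ j * c ^ (2*m - j) * ((2*m).choose j)) else 0 := by
    intro j hj
    have hjle : j ≤ 2*m := by simpa [Nat.lt_succ_iff] using Finset.mem_range.mp hj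
    rcases Nat.even_or_odd j with he | ho
    · have hE : Even (2*m - j) := by
        rcases he with ⟨t, ht⟩
        exact ⟨m - t, by omega⟩
      rw [hE.neg_pow, if_pos he]; ring
    · have hO : Odd (2*m - j) := by
        rcases ho with ⟨t, ht⟩
        exact ⟨m - t - 1, by omega⟩
      rw [hO.neg_pow, if_neg (Nat.not_even_iff_odd.mpr ho)]; ring
  rw [Finset.sum_congr rfl hcong, kh_sum_even (fun j => 2 * (a ^ j * c ^ (2*m - j) * ((2*m).choose j))) m,
    Finset.mul_sum]
  refine Finset.sum_congr rfl fun k hk => ?_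
  have hkm : k ≤ m := by simpa [Nat.lt_succ_iff] using Finset.mem_range.mp hk
  have : 2*m - 2*k = 2*(m-k) := by omega
  rw [this]



lemma kh_moment (n : ℕ) : ∀ (x : Fin n → ℝ) (m : ℕ),
    ∑ σ : Fin n → Bool, (∑ i, (if σ i then (1:ℝ) else -1) * x i) ^ (2*m)
      ≤ 2^n * (2*(m:ℝ))^m * (∑ i, x i ^ 2)^m := by
  induction n with
  | zero =>
    intro x m
    cases m with
    | zero => simp
    | succ m =>
      simp [Finset.univ_unique, zero_pow (by omega : 2*(m+1) ≠ 0), zero_pow (by omega : m+1 ≠ 0)]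
  | succ n ih =>
    intro x m
    set c := x 0 with hc
    set x' : Fin n → ℝ := fun i => x i.succ with hx'
    set A' := ∑ i, x' i ^ 2 with hA'def
    have hA' : (0:ℝ) ≤ A' := Finset.sum_nonneg fun i _ => sq_nonneg _
    set a : (Fin n → Bool) → ℝ := fun τ => ∑ i, (if τ i then (1:ℝ) else -1) * x' i with ha
    have hsplit : (∑ σ : Fin (n+1) → Bool, (∑ i, (if σ i then (1:ℝ) else -1) * x i) ^ (2*m))
        = ∑ τ : Fin n → Bool, ((a τ + c)^(2*m) + (a τ - c)^(2*m)) := by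
      rw [← Fintype.sum_equiv (Fin.consEquiv (fun _ : Fin (n+1) => Bool))
        (fun p => (∑ i, (if (Fin.cons p.1 p.2 : Fin (n+1) → Bool) i then (1:ℝ) else -1) * x i) ^ (2*m))
        (fun σ => (∑ i, (if σ i then (1:ℝ) else -1) * x i) ^ (2*m))
        (fun p => rfl)]
      rw [Fintype.sum_prod_type, Fintype.sum_bool, ← Finset.sum_add_distrib]
      refine Finset.sum_congr rfl fun τ _ => ?_
      congr 1
      · congr 1
        rw [Fin.sum_univ_succ]
        simp only [Fin.cons_zero, Fin.cons_succ, if_true]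
        rw [ha]
        rw [one_mul]; exact add_comm (x 0) _
      · congr 1
        rw [Fin.sum_univ_succ]
        simp only [Fin.cons_zero, Fin.cons_succ, if_false, Bool.false_eq_true]
        show -1 * x 0 + (∑ i : Fin n, (if τ i = true then (1:ℝ) else -1) * x i.succ) = a τ - c
        rw [ha]
        ring
    rw [hsplit]
    have hswap : (∑ τ : Fin n → Bool, ((a τ + c)^(2*m) + (a τ - c)^(2*m)))
        = 2 * ∑ k ∈ range (m+1),
            (c^(2*(m-k)) * ((2*m).choose (2*k))) * ∑ τ : Fin n → Bool, (a τ)^(2*k) := by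
      rw [Finset.sum_congr rfl (fun τ _ => kh_pair (a τ) c m), ← Finset.mul_sum, Finset.sum_comm]
      congr 1
      refine Finset.sum_congr rfl fun k _ => ?_
      rw [Finset.mul_sum]
      exact Finset.sum_congr rfl fun τ _ => by ring
    rw [hswap]
    have hbound : ∀ k ∈ range (m+1),
        (c^(2*(m-k)) * ((2*m).choose (2*k))) * ∑ τ : Fin n → Bool, (a τ)^(2*k)
          ≤ 2^n * (2*(m:ℝ))^m * ((c^2)^(m-k) * A'^k * (m.choose k)) := by
      intro k hkr
      have hkm : k ≤ m := Nat.lt_succ_iff.mp (Finset.mem_range.mp hkr)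
      have hIH : ∑ τ : Fin n → Bool, (a τ)^(2*k) ≤ 2^n * (2*(m:ℝ))^k * A'^k := by
        refine le_trans (ih x' k) ?_
        have h2 : (2*(k:ℝ))^k ≤ (2*(m:ℝ))^k := by
          apply pow_le_pow_left₀ (by positivity)
          have : (k:ℝ) ≤ m := by exact_mod_cast hkm
          linarith
        have h3 := mul_le_mul_of_nonneg_right
          (mul_le_mul_of_nonneg_left h2 (by positivity : (0:ℝ) ≤ 2^n)) (pow_nonneg hA' k)
        calc 2^n * (2*(k:ℝ))^k * A'^k = 2^n * ((2*(k:ℝ))^k) * A'^k := by ring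
          _ ≤ 2^n * ((2*(m:ℝ))^k) * A'^k := h3
          _ = 2^n * (2*(m:ℝ))^k * A'^k := by ring
      have hcounted : ((2*m).choose (2*k) : ℝ) ≤ (2*(m:ℝ))^(m-k) * (m.choose k) := by
        have h1 : (2*m).choose (2*k) ≤ (2*m)^(m-k) * m.choose k := by
          have e1 : (2*m).choose (2*k) = (2*m).choose (2*(m-k)) := by
            rw [show 2*(m-k) = 2*m - 2*k from by omega, Nat.choose_symm (by omega)]
          rw [e1, show m.choose k = m.choose (m-k) from (Nat.choose_symm hkm).symm]
          exact kh_choose_bound m (m-k) (by omega)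
        calc ((2*m).choose (2*k) : ℝ) ≤ (((2*m)^(m-k) * m.choose k : ℕ) : ℝ) := by exact_mod_cast h1
          _ = (2*(m:ℝ))^(m-k) * (m.choose k) := by push_cast; ring
      have hcpow : c^(2*(m-k)) = (c^2)^(m-k) := by rw [← pow_mul]
      rw [hcpow]
      calc ((c^2)^(m-k) * ((2*m).choose (2*k))) * ∑ τ : Fin n → Bool, (a τ)^(2*k)
          ≤ ((c^2)^(m-k) * ((2*m).choose (2*k))) * (2^n * (2*(m:ℝ))^k * A'^k) := by
            refine mul_le_mul_of_nonneg_left hIH (by positivity)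
        _ ≤ ((c^2)^(m-k) * ((2*(m:ℝ))^(m-k) * (m.choose k))) * (2^n * (2*(m:ℝ))^k * A'^k) := by
            refine mul_le_mul_of_nonneg_right
              (mul_le_mul_of_nonneg_left hcounted (by positivity)) (by positivity)
        _ = 2^n * ((2*(m:ℝ))^(m-k) * (2*(m:ℝ))^k) * ((c^2)^(m-k) * A'^k * (m.choose k)) := by
            ring
        _ = 2^n * (2*(m:ℝ))^m * ((c^2)^(m-k) * A'^k * (m.choose k)) := by
            rw [← pow_add, show m-k+k = m from by omega]
    have hfin : (∑ i : Fin (n+1), x i ^ 2) = A' + c^2 := by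
      rw [Fin.sum_univ_succ]; rw [hA'def]; ring
    calc 2 * ∑ k ∈ range (m+1),
            (c^(2*(m-k)) * ((2*m).choose (2*k))) * ∑ τ : Fin n → Bool, (a τ)^(2*k)
        ≤ 2 * ∑ k ∈ range (m+1), 2^n * (2*(m:ℝ))^m * ((c^2)^(m-k) * A'^k * (m.choose k)) := by
          refine mul_le_mul_of_nonneg_left (Finset.sum_le_sum hbound) (by norm_num)
      _ = 2^(n+1) * (2*(m:ℝ))^m * (∑ k ∈ range (m+1), A'^k * (c^2)^(m-k) * (m.choose k)) := by
          rw [Finset.mul_sum, Finset.mul_sum]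
          refine Finset.sum_congr rfl fun k _ => by ring
      _ = 2^(n+1) * (2*(m:ℝ))^m * (A' + c^2)^m := by rw [add_pow]
      _ = 2^(n+1) * (2*(m:ℝ))^m * (∑ i : Fin (n+1), x i ^ 2)^m := by rw [hfin]


theorem stmt18 : ∃ C : ℝ, 0 < C ∧
    ∀ (n : ℕ) (x : Fin n → ℝ) (l : ℝ), 1 ≤ l →
      (∑ σ : Fin n → Bool, |∑ i, (if σ i then (1 : ℝ) else -1) * x i| ^ l) / 2 ^ n
        ≤ (C * l * ∑ i, (x i) ^ 2) ^ (l / 2) := by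
  refine ⟨3, by norm_num, ?_⟩
  intro n x l hl
  have hl0 : (0:ℝ) < l := lt_of_lt_of_le one_pos hl
  set S : (Fin n → Bool) → ℝ := fun σ => ∑ i, (if σ i then (1:ℝ) else -1) * x i with hS
  set A := ∑ i, x i ^ 2 with hA'
  have hA : (0:ℝ) ≤ A := Finset.sum_nonneg fun i _ => sq_nonneg _
  set m := ⌈l/2⌉₊ with hm
  have hm0 : 0 < m := Nat.ceil_pos.mpr (by positivity)
  have hm0' : (0:ℝ) < m := by exact_mod_cast hm0
  have hlm : l ≤ 2*(m:ℝ) := by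
    have := Nat.le_ceil (l/2)
    rw [← hm] at this
    linarith
  have hmu : (m:ℝ) < l/2 + 1 := Nat.ceil_lt_add_one (by positivity)
  set p := 2*(m:ℝ)/l with hp
  have hp1 : 1 ≤ p := (one_le_div hl0).mpr hlm
  have hp0 : p ≠ 0 := by positivity
  set w : (Fin n → Bool) → ℝ := fun _ => ((2:ℝ)^n)⁻¹ with hw
  set z : (Fin n → Bool) → ℝ := fun σ => |S σ| ^ l with hz
  have hwnn : ∀ σ ∈ (univ : Finset (Fin n → Bool)), 0 ≤ w σ := fun σ _ => by positivity
  have hw1 : ∑ σ : Fin n → Bool, w σ = 1 := by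
    rw [Finset.sum_const, Finset.card_univ]
    simp only [Fintype.card_fun, Fintype.card_fin, Fintype.card_bool, nsmul_eq_mul]
    push_cast
    field_simp
  have hznn : ∀ σ ∈ (univ : Finset (Fin n → Bool)), 0 ≤ z σ :=
    fun σ _ => Real.rpow_nonneg (abs_nonneg _) l
  have J := Real.rpow_arith_mean_le_arith_mean_rpow univ w z hwnn hw1 hznn hp1
  have hTz : (∑ σ : Fin n → Bool, |S σ| ^ l) / 2 ^ n = ∑ σ : Fin n → Bool, w σ * z σ := by
    rw [← Finset.mul_sum, inv_mul_eq_div]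
  set T := (∑ σ : Fin n → Bool, |S σ| ^ l) / 2 ^ n with hT
  have hTnn : 0 ≤ T := by
    apply div_nonneg _ (by positivity)
    exact Finset.sum_nonneg fun σ _ => Real.rpow_nonneg (abs_nonneg _) l
  have hzp : ∀ σ, z σ ^ p = (S σ)^(2*m) := by
    intro σ
    rw [hz]
    rw [← Real.rpow_mul (abs_nonneg _)]
    have : l * p = ((2*m : ℕ):ℝ) := by
      rw [hp]; push_cast; field_simp
    rw [this, Real.rpow_natCast, (even_two_mul m).pow_abs]
  have hmom : ∑ σ : Fin n → Bool, w σ * z σ ^ p ≤ (2*(m:ℝ))^m * A^m := by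
    have h1 : ∑ σ : Fin n → Bool, w σ * z σ ^ p
        = ((2:ℝ)^n)⁻¹ * ∑ σ : Fin n → Bool, (S σ)^(2*m) := by
      rw [Finset.mul_sum]
      exact Finset.sum_congr rfl fun σ _ => by rw [hzp σ]
    rw [h1]
    have h2 := kh_moment n x m
    calc ((2:ℝ)^n)⁻¹ * ∑ σ : Fin n → Bool, (S σ)^(2*m)
        ≤ ((2:ℝ)^n)⁻¹ * (2^n * (2*(m:ℝ))^m * A^m) := by
          exact mul_le_mul_of_nonneg_left h2 (by positivity)
      _ = (2*(m:ℝ))^m * A^m := by field_simp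
  have hTp : T ^ p ≤ (2*(m:ℝ))^m * A^m := by
    rw [hTz]; exact le_trans J hmom
  have hstep : T ≤ ((2*(m:ℝ))^m * A^m) ^ (1/p) := by
    have h3 := Real.rpow_le_rpow (Real.rpow_nonneg hTnn p) hTp (by positivity : (0:ℝ) ≤ 1/p)
    calc T = (T ^ p) ^ (1/p) := by
          rw [← Real.rpow_mul hTnn, mul_one_div_cancel hp0, Real.rpow_one]
      _ ≤ ((2*(m:ℝ))^m * A^m) ^ (1/p) := h3
  refine le_trans hstep ?_
  have hB : (0:ℝ) ≤ 2*(m:ℝ)*A := by positivity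
  have e1 : (2*(m:ℝ))^m * A^m = (2*(m:ℝ)*A) ^ ((m:ℕ):ℝ) := by
    rw [Real.rpow_natCast]; ring
  rw [e1, ← Real.rpow_mul hB]
  have e2 : (m:ℝ) * (1/p) = l/2 := by
    rw [hp]; field_simp
  rw [e2]
  apply Real.rpow_le_rpow hB _ (by positivity)
  have : 2*(m:ℝ) ≤ 3*l := by linarith
  nlinarith
end
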